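/- arXiv:1711.03315 — 8 statements merged into one kernel-verified Lean document; each statement's English description precedes it below -/
import Mathlib

section
/- Let K ⊆ ℝⁿ × ℝ be a closed set, y₀ ∈ K, d ∈ ℝⁿ, and set d₁ := (d, 1). If v₀ belongs to the metric projection of d₁ onto T_K(y₀) ∩ (ℝⁿ × {1}), then there exists ζ ∈ N_K(y₀) such that d₁ − v₀ = (Pr ζ, 0), where Pr : ℝⁿ × ℝ → ℝⁿ denotes the projection onto the first n coordinates. -/
open Set Filter Metric MeasureTheory Topology

set_option maxHeartbeats 400000

noncomputable section

/-- The Bouligand tangent cone to `K` at `y`: vectors `v` for which there are sequences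
`t k → 0⁺` and `w k → v` with `y + t k • w k ∈ K`. -/
def bouligandTangentCone {X : Type*} [NormedAddCommGroup X] [NormedSpace ℝ X]
    (K : Set X) (y : X) : Set X :=
  {v | ∃ t : ℕ → ℝ, ∃ w : ℕ → X,
    (∀ k, 0 < t k) ∧ Tendsto t atTop (𝓝 0) ∧ Tendsto w atTop (𝓝 v) ∧
    ∀ k, y + t k • w k ∈ K}

/-- Proximal normals: `ζ` with `dist (y + t • ζ) K = t * ‖ζ‖` for some `t > 0`. -/
def proxNormalCone {X : Type*} [NormedAddCommGroup X] [NormedSpace ℝ X]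
    (K : Set X) (y : X) : Set X :=
  {ζ | ∃ t : ℝ, 0 < t ∧ infDist (y + t • ζ) K = t * ‖ζ‖}

/-- The cone of limiting normals: limits of proximal normals at nearby points of `K`. -/
def limitingNormalCone {X : Type*} [NormedAddCommGroup X] [NormedSpace ℝ X]
    (K : Set X) (y : X) : Set X :=
  {ζ | ∃ yk : ℕ → X, ∃ ζk : ℕ → X,
    (∀ k, yk k ∈ K) ∧ (∀ k, ζk k ∈ proxNormalCone K (yk k)) ∧
    Tendsto yk atTop (𝓝 y) ∧ Tendsto ζk atTop (𝓝 ζ)}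

/-- Metric projection of `d` onto `A`. -/
def metricProj {X : Type*} [NormedAddCommGroup X] (A : Set X) (d : X) : Set X :=
  {a ∈ A | ‖d - a‖ = infDist d A}

/-- `ℝⁿ` with the Euclidean norm. -/
abbrev En (n : ℕ) := EuclideanSpace ℝ (Fin n)

/-- `ℝⁿ × ℝ` with the Euclidean (L²) norm. -/
abbrev Yn (n : ℕ) := WithLp 2 (En n × ℝ)

/-- The pair `(x, t)` as an element of `ℝⁿ × ℝ`. -/
def toY {n : ℕ} (x : En n) (t : ℝ) : Yn n := (WithLp.equiv 2 (En n × ℝ)).symm (x, t)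

/-- `Pr : ℝⁿ × ℝ → ℝⁿ`, projection on the first `n` coordinates. -/
def PrY {n : ℕ} (y : Yn n) : En n := ((WithLp.equiv 2 (En n × ℝ)) y).1

/-- The last ("time") coordinate of an element of `ℝⁿ × ℝ`. -/
def tY {n : ℕ} (y : Yn n) : ℝ := ((WithLp.equiv 2 (En n × ℝ)) y).2

/-- The hyperplane `ℝⁿ × {1}`. -/
def sliceOne (n : ℕ) : Set (Yn n) := {y | tY y = 1}

namespace S1
variable {n : ℕ}

@[simp] lemma PrY_toY (x : En n) (t : ℝ) : PrY (toY x t) = x := rfl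
@[simp] lemma tY_toY (x : En n) (t : ℝ) : tY (toY x t) = t := rfl
@[simp] lemma toY_PrY_tY (y : Yn n) : toY (PrY y) (tY y) = y := rfl
@[simp] lemma PrY_add (a b : Yn n) : PrY (a + b) = PrY a + PrY b := rfl
@[simp] lemma PrY_sub (a b : Yn n) : PrY (a - b) = PrY a - PrY b := rfl
@[simp] lemma PrY_smul (c : ℝ) (a : Yn n) : PrY (c • a) = c • PrY a := rfl
@[simp] lemma PrY_neg (a : Yn n) : PrY (-a) = -PrY a := rfl
@[simp] lemma PrY_zero : PrY (0 : Yn n) = 0 := rfl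
@[simp] lemma tY_add (a b : Yn n) : tY (a + b) = tY a + tY b := rfl
@[simp] lemma tY_sub (a b : Yn n) : tY (a - b) = tY a - tY b := rfl
@[simp] lemma tY_smul (c : ℝ) (a : Yn n) : tY (c • a) = c * tY a := rfl
@[simp] lemma tY_zero : tY (0 : Yn n) = 0 := rfl

lemma inner_Yn (a b : Yn n) :
    (inner ℝ a b : ℝ) = (inner ℝ (PrY a) (PrY b) : ℝ) + tY a * tY b := by
  rw [WithLp.prod_inner_apply, RCLike.inner_apply, conj_trivial]
  exact congrArg (inner ℝ (PrY a) (PrY b) + ·) (mul_comm _ _)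

lemma normsq_Yn (a : Yn n) : ‖a‖ ^ 2 = ‖PrY a‖ ^ 2 + (tY a) ^ 2 := by
  have h1 := real_inner_self_eq_norm_sq a
  have h2 := real_inner_self_eq_norm_sq (PrY a)
  have := inner_Yn a a
  nlinarith [this]

lemma Yn_ext {a b : Yn n} (h1 : PrY a = PrY b) (h2 : tY a = tY b) : a = b := by
  have : toY (PrY a) (tY a) = toY (PrY b) (tY b) := by rw [h1, h2]
  simpa using this

lemma norm_Yn_le (a : Yn n) : ‖a‖ ≤ ‖PrY a‖ + |tY a| := by
  have h := normsq_Yn a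
  have h1 : ‖a‖ ^ 2 ≤ (‖PrY a‖ + |tY a|) ^ 2 := by
    rw [h]; nlinarith [norm_nonneg (PrY a), abs_nonneg (tY a), sq_abs (tY a)]
  have h2 : (0:ℝ) ≤ ‖PrY a‖ + |tY a| := by positivity
  nlinarith [norm_nonneg a]

lemma abs_le_of_sq_le {a b : ℝ} (h : a^2 ≤ b^2) (hb : 0 ≤ b) : |a| ≤ b :=
  abs_le.2 (abs_le_of_sq_le_sq' h hb)

lemma le_of_sq_le {a b : ℝ} (h : a^2 ≤ b^2) (hb : 0 ≤ b) : a ≤ b :=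
  (abs_le_of_sq_le_sq' h hb).2

lemma le_add_one_of_sq_le {a M : ℝ} (ha : 0 ≤ a) (h : a^2 ≤ M) : a ≤ M + 1 := by
  nlinarith [sq_nonneg (a - 1)]

lemma continuous_PrY : Continuous (PrY (n := n)) :=
  continuous_fst.comp (WithLp.prod_continuous_ofLp _ _ _)
lemma continuous_tY : Continuous (tY (n := n)) :=
  continuous_snd.comp (WithLp.prod_continuous_ofLp _ _ _)

/-- weighted quadratic -/
def qf (β : ℝ) (a : Yn n) : ℝ := ‖PrY a‖ ^ 2 + β * (tY a) ^ 2

lemma continuous_qf (β : ℝ) : Continuous (qf (n := n) β) := by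
  unfold qf
  exact ((continuous_PrY.norm.pow 2)).add (continuous_const.mul (continuous_tY.pow 2))

lemma inner_gvec (β : ℝ) (a e : Yn n) :
    (inner ℝ (toY (PrY a) (β * tY a)) e : ℝ)
      = (inner ℝ (PrY a) (PrY e) : ℝ) + β * (tY a * tY e) := by
  rw [inner_Yn]; simp; ring

lemma qf_expand (β : ℝ) (a e : Yn n) :
    qf β (a - e) = qf β a - 2 * ((inner ℝ (PrY a) (PrY e) : ℝ) + β * (tY a * tY e)) + qf β e := by
  unfold qf
  have h : ‖PrY a - PrY e‖ ^ 2 = ‖PrY a‖ ^ 2 - 2 * (inner ℝ (PrY a) (PrY e) : ℝ) + ‖PrY e‖ ^ 2 := by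
    rw [← real_inner_self_eq_norm_sq, ← real_inner_self_eq_norm_sq, ← real_inner_self_eq_norm_sq]
    rw [inner_sub_sub_self, real_inner_comm (PrY e) (PrY a)]; ring
  simp only [PrY_sub, tY_sub, h]; ring

lemma qf_le_beta_normsq {β : ℝ} (hβ : 1 ≤ β) (e : Yn n) : qf β e ≤ β * ‖e‖ ^ 2 := by
  rw [normsq_Yn]; unfold qf; nlinarith [sq_nonneg ‖PrY e‖]

lemma qf_smul (β c : ℝ) (a : Yn n) : qf β (c • a) = c ^ 2 * qf β a := by
  unfold qf
  rw [PrY_smul, tY_smul, norm_smul, Real.norm_eq_abs, mul_pow, mul_pow, sq_abs]; ring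

lemma prox_smul {K : Set (Yn n)} {y ζ : Yn n} (h : ζ ∈ proxNormalCone K y) {c : ℝ}
    (hc : 0 < c) : c • ζ ∈ proxNormalCone K y := by
  obtain ⟨t, ht, heq⟩ := h
  refine ⟨t / c, by positivity, ?_⟩
  have h1 : y + (t / c) • (c • ζ) = y + t • ζ := by
    rw [smul_smul, div_mul_cancel₀]; exact ne_of_gt hc
  rw [h1, heq, norm_smul]
  simp [abs_of_pos hc]; field_simp

/-- the key geometric lemma: minimizers of the weighted quadratic over a local portion
of `K` give proximal normals. -/
lemma prox_of_min {K : Set (Yn n)} (y₀ : Yn n) {z p : Yn n} (hz : z ∈ K)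
    {β : ℝ} (hβ : 1 ≤ β) {ρ : ℝ} (hρ : ‖z - y₀‖ < ρ)
    (hmin : ∀ x ∈ K, ‖x - y₀‖ ≤ ρ → qf β (p - z) ≤ qf β (p - x)) :
    toY (PrY (p - z)) (β * tY (p - z)) ∈ proxNormalCone K z := by
  set g : Yn n := toY (PrY (p - z)) (β * tY (p - z)) with hg
  have hKne : K.Nonempty := ⟨z, hz⟩
  set t : ℝ := min (1 / (2 * β)) ((ρ - ‖z - y₀‖) / (2 * (‖g‖ + 1))) with hT
  have hβ0 : (0:ℝ) < β := lt_of_lt_of_le one_pos hβ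
  have ht : 0 < t := by
    apply lt_min
    · positivity
    · apply div_pos (by linarith) (by positivity)
  refine ⟨t, ht, ?_⟩
  have hub : infDist (z + t • g) K ≤ t * ‖g‖ := by
    calc infDist (z + t • g) K ≤ dist (z + t • g) z := infDist_le_dist_of_mem hz
    _ = ‖t • g‖ := by rw [dist_eq_norm, add_sub_cancel_left]
    _ = t * ‖g‖ := by rw [norm_smul, Real.norm_eq_abs, abs_of_pos ht]
  refine le_antisymm hub ?_
  by_contra hlt
  push_neg at hlt
  obtain ⟨x, hxK, hxd⟩ := (infDist_lt_iff hKne).1 hlt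
  set e : Yn n := x - z with he
  have hball : ‖e - t • g‖ < t * ‖g‖ := by
    have h0 : x - (z + t • g) = e - t • g := by rw [he]; abel
    calc ‖e - t • g‖ = dist x (z + t•g) := by rw [dist_eq_norm, h0]
    _ < t * ‖g‖ := by rw [dist_comm] at hxd; exact hxd
  have hkey : ‖e‖ ^ 2 < 2 * t * (inner ℝ g e : ℝ) := by
    have h2 : ‖e - t • g‖ ^ 2 < (t * ‖g‖) ^ 2 := by
      have h0 : 0 ≤ ‖e - t•g‖ := norm_nonneg _
      nlinarith
    have h3 : ‖e - t • g‖ ^ 2 = ‖e‖ ^ 2 - 2 * t * (inner ℝ e g : ℝ) + t ^ 2 * ‖g‖ ^ 2 := by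
      rw [norm_sub_sq_real, real_inner_smul_right, norm_smul, Real.norm_eq_abs, abs_of_pos ht,
        mul_pow]
      ring
    rw [real_inner_comm] at h3
    nlinarith
  have hxball : ‖x - y₀‖ ≤ ρ := by
    have h1 : ‖x - y₀‖ ≤ ‖e - t • g‖ + ‖t • g‖ + ‖z - y₀‖ := by
      have h0 : x - y₀ = (e - t • g) + t • g + (z - y₀) := by rw [he]; abel
      rw [h0]
      exact le_trans (norm_add_le _ _) (by gcongr; exact norm_add_le _ _)
    have h2 : ‖t • g‖ ≤ (ρ - ‖z - y₀‖) / 2 := by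
      rw [norm_smul, Real.norm_eq_abs, abs_of_pos ht]
      have ht2 : t ≤ (ρ - ‖z - y₀‖) / (2 * (‖g‖ + 1)) := min_le_right _ _
      have hgn : (0:ℝ) ≤ ‖g‖ := norm_nonneg _
      calc t * ‖g‖ ≤ ((ρ - ‖z - y₀‖) / (2 * (‖g‖ + 1))) * ‖g‖ := by
            apply mul_le_mul_of_nonneg_right ht2 hgn
      _ ≤ (ρ - ‖z - y₀‖) / 2 := by
            rw [div_mul_eq_mul_div, div_le_div_iff₀ (by positivity) (by norm_num)]
            nlinarith
    have h3 : ‖e - t • g‖ < t * ‖g‖ := hball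
    have h4 : t * ‖g‖ ≤ (ρ - ‖z - y₀‖) / 2 := by
      rw [norm_smul, Real.norm_eq_abs, abs_of_pos ht] at h2; exact h2
    linarith
  have hcomp := hmin x hxK hxball
  have hpx : p - x = (p - z) - e := by rw [he]; abel
  have hexp : qf β (p - x) = qf β (p - z) - 2 * (inner ℝ g e : ℝ) + qf β e := by
    rw [hpx, qf_expand β (p - z) e, inner_gvec]
  have hqe : qf β e ≤ β * ‖e‖ ^ 2 := qf_le_beta_normsq hβ e
  have h2ge : 2 * (inner ℝ g e : ℝ) ≤ β * ‖e‖ ^ 2 := by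
    rw [hexp] at hcomp; linarith
  have htb : t ≤ 1 / (2 * β) := min_le_left _ _
  have hepos : 0 < ‖e‖ ^ 2 := by
    rcases eq_or_ne e 0 with h | h
    · exfalso; rw [h] at hball; simp at hball
      rw [norm_smul, Real.norm_eq_abs, abs_of_pos ht] at hball; linarith
    · exact pow_pos (norm_pos_iff.2 h) 2
  have hlt2 : ‖e‖ ^ 2 < t * (β * ‖e‖ ^ 2) := by
    calc ‖e‖ ^ 2 < 2 * t * (inner ℝ g e : ℝ) := hkey
    _ = t * (2 * (inner ℝ g e : ℝ)) := by ring
    _ ≤ t * (β * ‖e‖ ^ 2) := by apply mul_le_mul_of_nonneg_left h2ge (le_of_lt ht)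
  have hlt3 : ‖e‖ ^ 2 < (1 / (2*β)) * (β * ‖e‖ ^ 2) := by
    calc ‖e‖^2 < t * (β * ‖e‖^2) := hlt2
    _ ≤ (1/(2*β)) * (β * ‖e‖^2) := by
        apply mul_le_mul_of_nonneg_right htb (by positivity)
  have hhalf : (1 / (2*β)) * (β * ‖e‖ ^ 2) = ‖e‖ ^ 2 / 2 := by
    field_simp
  rw [hhalf] at hlt3
  linarith

lemma exists_min {K : Set (Yn n)} (hK : IsClosed K) {y₀ : Yn n} (hy₀ : y₀ ∈ K)
    (p : Yn n) (β : ℝ) {ρ : ℝ} (hρ : 0 < ρ) :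
    ∃ z ∈ K, ‖z - y₀‖ ≤ ρ ∧ ∀ x ∈ K, ‖x - y₀‖ ≤ ρ → qf β (p - z) ≤ qf β (p - x) := by
  have hcpt : IsCompact (K ∩ closedBall y₀ ρ) := (isCompact_closedBall y₀ ρ).inter_left hK
  have hne : (K ∩ closedBall y₀ ρ).Nonempty := ⟨y₀, hy₀, mem_closedBall_self hρ.le⟩
  have hcont : ContinuousOn (fun z => qf β (p - z)) (K ∩ closedBall y₀ ρ) :=
    ((continuous_qf β).comp (continuous_const.sub continuous_id)).continuousOn
  obtain ⟨z, hzmem, hzmin⟩ := hcpt.exists_isMinOn hne hcont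
  refine ⟨z, hzmem.1, mem_closedBall_iff_norm.1 hzmem.2, fun x hx hxb => ?_⟩
  exact hzmin ⟨hx, mem_closedBall_iff_norm.2 hxb⟩

lemma tangent_of_seq {K : Set (Yn n)} {y₀ : Yn n} (t : ℕ → ℝ) (u : ℕ → Yn n) (v : Yn n)
    (h1 : ∀ k, 0 < t k) (h2 : Tendsto t atTop (𝓝 0)) (h3 : Tendsto u atTop (𝓝 v))
    (h4 : ∀ k, y₀ + t k • u k ∈ K) : v ∈ bouligandTangentCone K y₀ :=
  ⟨t, u, h1, h2, h3, h4⟩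

lemma tangent_smul {K : Set (Yn n)} {y₀ : Yn n} {v : Yn n}
    (hv : v ∈ bouligandTangentCone K y₀) {c : ℝ} (hc : 0 < c) :
    c • v ∈ bouligandTangentCone K y₀ := by
  obtain ⟨t, u, h1, h2, h3, h4⟩ := hv
  refine ⟨fun k => t k / c, fun k => c • u k, fun k => div_pos (h1 k) hc, ?_,
    h3.const_smul c, fun k => ?_⟩
  · simpa using h2.div_const c
  · have h0 : y₀ + (t k / c) • (c • u k) = y₀ + t k • u k := by
      rw [smul_smul, div_mul_cancel₀ _ (ne_of_gt hc)]
    rw [h0]; exact h4 k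

/-- constants -/
def kap {n : ℕ} (d : En n) (v₀ : Yn n) : ℝ :=
  (inner ℝ (d - PrY v₀) d : ℝ) - ‖d - PrY v₀‖ ^ 2
def C0 {n : ℕ} (d : En n) (v₀ : Yn n) : ℝ :=
  (2 * ‖d - PrY v₀‖ + ‖d - PrY v₀‖ * ‖d‖) ^ 2
def CA {n : ℕ} (d : En n) (v₀ : Yn n) : ℝ := 4 * (kap d v₀) ^ 2 + 2 * C0 d v₀
def CB {n : ℕ} (d : En n) (v₀ : Yn n) : ℝ := (kap d v₀) ^ 2 + C0 d v₀

lemma C0_nonneg {n : ℕ} (d : En n) (v₀ : Yn n) : 0 ≤ C0 d v₀ := sq_nonneg _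
lemma CA_nonneg {n : ℕ} (d : En n) (v₀ : Yn n) : 0 ≤ CA d v₀ := by
  have := C0_nonneg d v₀; have := sq_nonneg (kap d v₀); unfold CA; linarith
lemma CB_nonneg {n : ℕ} (d : En n) (v₀ : Yn n) : 0 ≤ CB d v₀ := by
  have := C0_nonneg d v₀; have := sq_nonneg (kap d v₀); unfold CB; linarith

theorem heart {K : Set (Yn n)} (hK : IsClosed K) {y₀ : Yn n} (hy₀ : y₀ ∈ K)
    (d : En n) (v₀ : Yn n) (hv₀T : v₀ ∈ bouligandTangentCone K y₀)
    (hv₀s : tY v₀ = 1)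
    (hproj : ‖toY d 1 - v₀‖ = infDist (toY d 1)
      (bouligandTangentCone K y₀ ∩ sliceOne n))
    {β : ℝ} (hβ : ‖d - PrY v₀‖ + 2 ≤ β) {ε : ℝ} (hε : 0 < ε) (hε1 : ε ≤ 1) :
    ∃ y' ∈ K, ∃ ζ' ∈ proxNormalCone K y', dist y' y₀ < ε ∧
      ‖PrY ζ' - (d - PrY v₀)‖ ^ 2 ≤ CB d v₀ / β + ε ∧
      (tY ζ') ^ 2 ≤ CA d v₀ + ε := by
  classical
  set w : En n := d - PrY v₀ with hwdef
  set ω : ℝ := ‖w‖ with homega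
  set W : Yn n := toY w 0 with hWdef
  have hω0 : 0 ≤ ω := norm_nonneg _
  have hβ1 : (1:ℝ) ≤ β := by linarith
  have hβ0 : (0:ℝ) < β := by linarith
  have hβ2 : (2:ℝ) ≤ β := by linarith
  have hωβ : ω ≤ β := by linarith
  obtain ⟨t, u, ht0, htlim, hulim, huK⟩ := hv₀T
  set lam : ℝ := (β^2)⁻¹ with hlam
  have hlam0 : 0 < lam := by positivity
  set s : ℕ → ℝ := fun k => lam * t k with hs
  have hs0 : ∀ k, 0 < s k := fun k => mul_pos hlam0 (ht0 k)
  set p : ℕ → Yn n := fun k => y₀ + t k • u k + s k • W with hp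
  have hmins : ∀ k, ∃ z ∈ K, ‖z - y₀‖ ≤ 1 ∧
      ∀ x ∈ K, ‖x - y₀‖ ≤ 1 → qf β (p k - z) ≤ qf β (p k - x) :=
    fun k => exists_min hK hy₀ (p k) β one_pos
  choose z hzK hzball hzmin using hmins
  set θ : ℕ → Yn n := fun k => (s k)⁻¹ • (p k - z k) - W with hθ
  have hpz : ∀ k, p k - z k = s k • (W + θ k) := by
    intro k
    have : θ k = (s k)⁻¹ • (p k - z k) - W := rfl
    rw [this, smul_add, smul_sub, smul_smul, mul_inv_cancel₀ (ne_of_gt (hs0 k)), one_smul]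
    abel
  have hzeq : ∀ k, z k = y₀ + t k • (u k - lam • θ k) := by
    intro k
    have h1 : z k = p k - s k • (W + θ k) := by
      have := hpz k; rw [← this]; abel
    rw [h1]
    show y₀ + t k • u k + s k • W - s k • (W + θ k) = y₀ + t k • (u k - lam • θ k)
    simp only [hs]
    module
  -- the weighted quadratic at the minimizer is eventually at most ω²
  have hqW : qf β W = ω^2 := by
    unfold qf
    show ‖PrY (toY w 0)‖^2 + β * (tY (toY w 0))^2 = ω^2
    simp [homega]
  have hmY : Tendsto (fun k => ‖t k • u k‖) atTop (𝓝 0) := by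
    have h1 : Tendsto (fun k => t k • u k) atTop (𝓝 ((0:ℝ) • v₀)) := htlim.smul hulim
    rw [zero_smul] at h1
    simpa using h1.norm
  have hev1 : ∀ᶠ k in atTop, ‖t k • u k‖ ≤ 1 :=
    hmY.eventually_le_const (by norm_num)
  have hqbound : ∀ᶠ k in atTop, qf β (W + θ k) ≤ ω^2 := by
    filter_upwards [hev1] with k hk
    have hmb : ‖(y₀ + t k • u k) - y₀‖ ≤ 1 := by
      rw [add_sub_cancel_left]; exact hk
    have hmin2 := hzmin k _ (huK k) hmb
    have h1 : p k - (y₀ + t k • u k) = s k • W := by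
      show y₀ + t k • u k + s k • W - (y₀ + t k • u k) = s k • W
      abel
    rw [h1, qf_smul, hqW] at hmin2
    rw [hpz k, qf_smul] at hmin2
    have hs2 : (0:ℝ) < (s k)^2 := pow_pos (hs0 k) 2
    exact (mul_le_mul_iff_of_pos_left hs2).1 hmin2
  have hqsplit : ∀ θv : Yn n, qf β (W + θv) = ‖w + PrY θv‖^2 + β * (tY θv)^2 := by
    intro θv
    unfold qf
    have h1 : PrY (W + θv) = w + PrY θv := by rw [PrY_add]; simp [hWdef]
    have h2 : tY (W + θv) = tY θv := by rw [tY_add]; simp [hWdef]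
    rw [h1, h2]
  have hcomp_ev : ∀ᶠ k in atTop, ‖w + PrY (θ k)‖^2 + β * (tY (θ k))^2 ≤ ω^2 := by
    filter_upwards [hqbound] with k hk
    rwa [hqsplit (θ k)] at hk
  -- boundedness and subsequence extraction
  have hbnd_ev : ∀ᶠ k in atTop, θ k ∈ closedBall (0 : Yn n) (3*ω) := by
    filter_upwards [hcomp_ev] with k hk
    have h1 : ‖w + PrY (θ k)‖ ≤ ω := by
      have hsq : ‖w + PrY (θ k)‖^2 ≤ ω^2 := by
        linarith only [hk, mul_nonneg (le_of_lt hβ0) (sq_nonneg (tY (θ k)))]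
      exact le_of_sq_le hsq hω0
    have h2 : |tY (θ k)| ≤ ω := by
      have hsq : (tY (θ k))^2 ≤ ω^2 := by
        have hb1 : (0:ℝ) ≤ β - 1 := by linarith only [hβ1]
        linarith only [hk, sq_nonneg ‖w + PrY (θ k)‖,
          mul_nonneg hb1 (sq_nonneg (tY (θ k)))]
      exact abs_le_of_sq_le hsq hω0
    have h3 : ‖PrY (θ k)‖ ≤ 2*ω := by
      have : PrY (θ k) = (w + PrY (θ k)) - w := by abel
      rw [this]
      calc ‖(w + PrY (θ k)) - w‖ ≤ ‖w + PrY (θ k)‖ + ‖w‖ := norm_sub_le _ _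
      _ ≤ 2*ω := by rw [← homega]; linarith only [h1]
    rw [mem_closedBall, dist_zero_right]
    calc ‖θ k‖ ≤ ‖PrY (θ k)‖ + |tY (θ k)| := norm_Yn_le _
    _ ≤ 3*ω := by linarith
  have hfreq : ∃ᶠ k in atTop, θ k ∈ closedBall (0 : Yn n) (3*ω) := hbnd_ev.frequently
  obtain ⟨θlim, hθmem, φ, hφ, hθφ⟩ :=
    tendsto_subseq_of_frequently_bounded isBounded_closedBall hfreq
  have hφtop : Tendsto φ atTop atTop := hφ.tendsto_atTop
  set τl : ℝ := tY θlim with hτldef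
  set hl : En n := PrY θlim with hhldef
  -- the limiting inequality (*)
  have hstar : ‖w + hl‖^2 + β * τl^2 ≤ ω^2 := by
    have hcont : Tendsto (fun k => ‖w + PrY (θ (φ k))‖^2 + β * (tY (θ (φ k)))^2)
        atTop (𝓝 (‖w + hl‖^2 + β * τl^2)) := by
      have hPr : Tendsto (fun k => PrY (θ (φ k))) atTop (𝓝 hl) :=
        (continuous_PrY.tendsto _).comp hθφ
      have htv : Tendsto (fun k => tY (θ (φ k))) atTop (𝓝 τl) :=
        (continuous_tY.tendsto _).comp hθφ
      have h1 : Tendsto (fun k => ‖w + PrY (θ (φ k))‖^2) atTop (𝓝 (‖w + hl‖^2)) :=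
        ((hPr.const_add w).norm.pow 2)
      exact h1.add ((htv.pow 2).const_mul β)
    exact le_of_tendsto hcont (hφtop.eventually hcomp_ev)
  have hτlsq : τl^2 ≤ ω^2 := by
    have hb1 : (0:ℝ) ≤ β - 1 := by linarith only [hβ1]
    linarith only [hstar, sq_nonneg ‖w + hl‖, mul_nonneg hb1 (sq_nonneg τl)]
  have hτlabs : |τl| ≤ ω := abs_le_of_sq_le hτlsq hω0
  have hwhl : ‖w + hl‖ ≤ ω := by
    have hsq : ‖w + hl‖^2 ≤ ω^2 := by
      linarith only [hstar, mul_nonneg (le_of_lt hβ0) (sq_nonneg τl)]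
    exact le_of_sq_le hsq hω0
  have hhlnorm : ‖hl‖ ≤ 2*ω := by
    have h0 : hl = (w + hl) - w := by abel
    rw [h0]
    calc ‖(w + hl) - w‖ ≤ ‖w + hl‖ + ‖w‖ := norm_sub_le _ _
    _ ≤ 2*ω := by rw [← homega]; linarith only [hwhl]
  -- the tangent vector v₀ - lam • θlim
  have hvlamT : v₀ - lam • θlim ∈ bouligandTangentCone K y₀ := by
    apply tangent_of_seq (fun k => t (φ k)) (fun k => u (φ k) - lam • θ (φ k))
    · exact fun k => ht0 (φ k)
    · exact htlim.comp hφtop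
    · exact (hulim.comp hφtop).sub (hθφ.const_smul lam)
    · intro k
      rw [← hzeq (φ k)]
      exact hzK (φ k)
  set τc : ℝ := 1 - lam * τl with hτcdef
  have hτc : (1:ℝ)/2 ≤ τc := by
    have h1 : τl ≤ β^2/2 := by
      have hτω : τl ≤ ω := (abs_le.1 hτlabs).2
      have hββ : β * 2 ≤ β * β := mul_le_mul_of_nonneg_left hβ2 (by linarith only [hβ0])
      have hsq2 : β^2 = β * β := sq β
      linarith only [hτω, hωβ, hββ, hsq2]
    have h2 : lam * τl ≤ lam * (β^2/2) := by
      apply mul_le_mul_of_nonneg_left h1 (le_of_lt hlam0)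
    have h3 : lam * (β^2/2) = 1/2 := by
      rw [hlam]; field_simp
    rw [hτcdef]; linarith
  have hτc0 : 0 < τc := by linarith
  set cv : Yn n := τc⁻¹ • (v₀ - lam • θlim) with hcvdef
  have hcvT : cv ∈ bouligandTangentCone K y₀ := tangent_smul hvlamT (by positivity)
  have hcvS : cv ∈ sliceOne n := by
    show tY cv = 1
    rw [hcvdef, tY_smul, tY_sub, tY_smul, hv₀s]
    show τc⁻¹ * (1 - lam * τl) = 1
    rw [← hτcdef, inv_mul_cancel₀ (ne_of_gt hτc0)]
  -- ω ≤ ‖d₁ - cv‖ via the projection property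
  have hWd : toY d 1 - v₀ = W := by
    apply Yn_ext
    · rw [hWdef]; simp [hwdef]
    · rw [hWdef]; simp [hv₀s]
  have hnormW : ‖W‖ = ω := by
    have h := normsq_Yn W
    rw [hWdef] at h ⊢
    simpa using h
  have hdlow : ω ≤ ‖toY d 1 - cv‖ := by
    have h1 : infDist (toY d 1) (bouligandTangentCone K y₀ ∩ sliceOne n)
        ≤ dist (toY d 1) cv := infDist_le_dist_of_mem ⟨hcvT, hcvS⟩
    rw [← hproj, hWd, hnormW] at h1
    rw [← dist_eq_norm]
    exact h1
  -- rewrite ‖d₁ - cv‖ in terms of the En-vector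
  set xv : En n := w + lam • (hl - τl • d) with hxvdef
  have hkey0 : τc * ω ≤ ‖xv‖ := by
    have hid : xv = τc • (d - τc⁻¹ • (PrY v₀ - lam • hl)) := by
      rw [smul_sub, smul_smul, mul_inv_cancel₀ (ne_of_gt hτc0), one_smul, hxvdef]
      rw [hτcdef, sub_smul, one_smul, smul_sub, smul_smul, hwdef]
      module
    have hPrcv : PrY (toY d 1 - cv) = d - τc⁻¹ • (PrY v₀ - lam • hl) := by
      rw [PrY_sub, hcvdef, PrY_smul, PrY_sub, PrY_smul]
      simp [hhldef]
    have htYcv : tY (toY d 1 - cv) = 0 := by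
      rw [tY_sub]
      have : tY cv = 1 := hcvS
      simp [this]
    have hnrm : ‖toY d 1 - cv‖ = ‖d - τc⁻¹ • (PrY v₀ - lam • hl)‖ := by
      have h1 : ‖toY d 1 - cv‖^2 = ‖d - τc⁻¹ • (PrY v₀ - lam • hl)‖^2 := by
        rw [normsq_Yn, hPrcv, htYcv]; ring
      have h2 := le_of_sq_le (le_of_eq h1) (norm_nonneg _)
      have h3 := le_of_sq_le (le_of_eq h1.symm) (norm_nonneg _)
      linarith
    rw [hid, norm_smul, Real.norm_eq_abs, abs_of_pos hτc0]
    rw [hnrm] at hdlow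
    exact mul_le_mul_of_nonneg_left hdlow (le_of_lt hτc0)
  -- scalar expansion of ‖xv‖²
  set ip : ℝ := (inner ℝ w (hl - τl • d) : ℝ) with hipdef
  have hxvsq : ‖xv‖^2 = ω^2 + 2*lam*ip + lam^2 * ‖hl - τl • d‖^2 := by
    rw [hxvdef, norm_add_sq_real, real_inner_smul_right, norm_smul, Real.norm_eq_abs,
      abs_of_pos hlam0, mul_pow, ← homega, ← hipdef]
    ring
  have hspade : (τc*ω)^2 ≤ ω^2 + 2*lam*ip + lam^2 * ‖hl - τl • d‖^2 := by
    rw [← hxvsq]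
    have h0 : 0 ≤ τc * ω := by positivity
    exact pow_le_pow_left₀ h0 hkey0 2
  -- bound ‖hl - τl•d‖² by C0
  have hC0b : ‖hl - τl • d‖^2 ≤ C0 d v₀ := by
    have h1 : ‖hl - τl • d‖ ≤ 2*ω + ω*‖d‖ := by
      calc ‖hl - τl • d‖ ≤ ‖hl‖ + ‖τl • d‖ := norm_sub_le _ _
      _ = ‖hl‖ + |τl| * ‖d‖ := by rw [norm_smul, Real.norm_eq_abs]
      _ ≤ 2*ω + ω*‖d‖ := by
          have := mul_le_mul_of_nonneg_right hτlabs (norm_nonneg d)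
          linarith
    have h2 : (0:ℝ) ≤ ‖hl - τl • d‖ := norm_nonneg _
    have h3 : C0 d v₀ = (2*ω + ω*‖d‖)^2 := by
      unfold C0; rw [← hwdef, ← homega]
    rw [h3]
    exact pow_le_pow_left₀ h2 h1 2
  have hkapval : kap d v₀ = (inner ℝ w d : ℝ) - ω^2 := by
    unfold kap; rw [← hwdef, ← homega]
  have hipexp : ip = (inner ℝ w hl : ℝ) - τl * (inner ℝ w d : ℝ) := by
    rw [hipdef, inner_sub_right, real_inner_smul_right]
  -- key inequality after dividing by lam
  have hkey1 : ‖hl‖^2 + β*τl^2 ≤ -2*τl*(kap d v₀) + lam * C0 d v₀ := by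
    have hdiv : -2*τl*ω^2 + lam*(τl^2*ω^2) ≤
        2*((inner ℝ w hl : ℝ) - τl*(inner ℝ w d : ℝ)) + lam*‖hl - τl • d‖^2 := by
      have e1 : (τc*ω)^2 = ω^2 + lam * (-2*τl*ω^2 + lam*(τl^2*ω^2)) := by
        rw [hτcdef]; ring
      have e2 : ω^2 + 2*lam*ip + lam^2 * ‖hl - τl • d‖^2
          = ω^2 + lam * (2*ip + lam*‖hl - τl • d‖^2) := by ring
      have h3 : lam * (-2*τl*ω^2 + lam*(τl^2*ω^2)) ≤ lam * (2*ip + lam*‖hl - τl • d‖^2) := by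
        rw [e1] at hspade; rw [e2] at hspade; linarith
      have h4 := (mul_le_mul_iff_of_pos_left hlam0).1 h3
      rw [hipexp] at h4
      linarith
    have hstar2 : 2*(inner ℝ w hl : ℝ) ≤ -‖hl‖^2 - β*τl^2 := by
      have hexp : ‖w + hl‖^2 = ω^2 + 2*(inner ℝ w hl : ℝ) + ‖hl‖^2 := by
        rw [norm_add_sq_real, ← homega]
      linarith only [hstar, hexp]
    rw [hkapval]
    have hx1 : lam * ‖hl - τl • d‖^2 ≤ lam * C0 d v₀ :=
      mul_le_mul_of_nonneg_left hC0b (le_of_lt hlam0)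
    have hx2 : 0 ≤ lam * (τl^2 * ω^2) :=
      mul_nonneg (le_of_lt hlam0) (mul_nonneg (sq_nonneg τl) (sq_nonneg ω))
    linarith only [hdiv, hstar2, hx1, hx2]
  -- time bound : (β τl)² ≤ CA
  have hβlam : β * lam = β⁻¹ := by
    rw [hlam]; field_simp
  have hkey2 : (β*τl)^2 ≤ CA d v₀ := by
    have h1 : β*τl^2 ≤ -2*τl*(kap d v₀) + lam * C0 d v₀ := by
      linarith only [hkey1, sq_nonneg ‖hl‖]
    have h2 : β*(β*τl^2) ≤ β*(-2*τl*(kap d v₀) + lam * C0 d v₀) :=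
      mul_le_mul_of_nonneg_left h1 (le_of_lt hβ0)
    have h3 : β * (lam * C0 d v₀) = β⁻¹ * C0 d v₀ := by
      rw [← mul_assoc, hβlam]
    have h4 : β⁻¹ * C0 d v₀ ≤ C0 d v₀ := by
      have hinv : β⁻¹ ≤ 1 := by
        rw [inv_le_one_iff₀]; right; linarith only [hβ1]
      exact mul_le_of_le_one_left (C0_nonneg d v₀) hinv
    have h5 : (β*τl)^2 ≤ -2*(β*τl)*(kap d v₀) + C0 d v₀ := by
      linarith only [h2, h3, h4]
    unfold CA
    linarith only [h5, sq_nonneg (β*τl + 2*(kap d v₀))]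
  -- horizontal bound : ‖hl‖² ≤ CB / β
  have hkey3 : ‖hl‖^2 ≤ CB d v₀ / β := by
    rw [le_div_iff₀ hβ0]
    have h1 : β*(‖hl‖^2 + β*τl^2) ≤ β*(-2*τl*(kap d v₀) + lam * C0 d v₀) :=
      mul_le_mul_of_nonneg_left hkey1 (le_of_lt hβ0)
    have hamgm : -2*(β*τl)*(kap d v₀) ≤ (β*τl)^2 + (kap d v₀)^2 := by
      linarith only [sq_nonneg (β*τl + kap d v₀)]
    have h3 : β * (lam * C0 d v₀) = β⁻¹ * C0 d v₀ := by
      rw [← mul_assoc, hβlam]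
    have h4 : β⁻¹ * C0 d v₀ ≤ C0 d v₀ := by
      have hinv : β⁻¹ ≤ 1 := by
        rw [inv_le_one_iff₀]; right; linarith only [hβ1]
      exact mul_le_of_le_one_left (C0_nonneg d v₀) hinv
    unfold CB
    linarith only [h1, hamgm, h3, h4]
  -- now pick a suitable index
  have hzφlim : Tendsto (fun k => z (φ k)) atTop (𝓝 y₀) := by
    have h1 : Tendsto (fun k => t (φ k) • (u (φ k) - lam • θ (φ k))) atTop
        (𝓝 ((0:ℝ) • (v₀ - lam • θlim))) :=
      (htlim.comp hφtop).smul ((hulim.comp hφtop).sub (hθφ.const_smul lam))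
    rw [zero_smul] at h1
    have h2 : Tendsto (fun k => y₀ + t (φ k) • (u (φ k) - lam • θ (φ k))) atTop
        (𝓝 (y₀ + 0)) := tendsto_const_nhds.add h1
    rw [add_zero] at h2
    have h3 : (fun k => z (φ k)) = fun k => y₀ + t (φ k) • (u (φ k) - lam • θ (φ k)) := by
      funext k; exact hzeq (φ k)
    rw [h3]
    exact h2
  have hev_dist : ∀ᶠ k in atTop, dist (z (φ k)) y₀ < ε :=
    (Metric.tendsto_nhds.1 hzφlim) ε hε
  have hPrθφ : Tendsto (fun k => ‖PrY (θ (φ k))‖^2) atTop (𝓝 (‖hl‖^2)) := by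
    have hPr : Tendsto (fun k => PrY (θ (φ k))) atTop (𝓝 hl) :=
      (continuous_PrY.tendsto _).comp hθφ
    exact hPr.norm.pow 2
  have hev_h : ∀ᶠ k in atTop, ‖PrY (θ (φ k))‖^2 < CB d v₀ / β + ε := by
    apply hPrθφ.eventually_lt_const
    linarith only [hkey3, hε]
  have htYθφ : Tendsto (fun k => (β * tY (θ (φ k)))^2) atTop (𝓝 ((β*τl)^2)) := by
    have htv : Tendsto (fun k => tY (θ (φ k))) atTop (𝓝 τl) :=
      (continuous_tY.tendsto _).comp hθφ
    exact ((htv.const_mul β).pow 2)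
  have hev_t : ∀ᶠ k in atTop, (β * tY (θ (φ k)))^2 < CA d v₀ + ε := by
    apply htYθφ.eventually_lt_const
    linarith only [hkey2, hε]
  obtain ⟨k, ⟨hk1, hk2⟩, hk3⟩ := ((hev_dist.and hev_h).and hev_t).exists
  set j : ℕ := φ k with hjdef
  have hzj1 : ‖z j - y₀‖ < 1 := by
    rw [← dist_eq_norm]
    calc dist (z j) y₀ < ε := hk1
    _ ≤ 1 := hε1
  have hgprox : toY (PrY (p j - z j)) (β * tY (p j - z j)) ∈ proxNormalCone K (z j) :=
    prox_of_min y₀ (hzK j) hβ1 hzj1 (hzmin j)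
  set ζ' : Yn n := (s j)⁻¹ • toY (PrY (p j - z j)) (β * tY (p j - z j)) with hζdef
  have hζprox : ζ' ∈ proxNormalCone K (z j) := prox_smul hgprox (inv_pos.2 (hs0 j))
  have hζeq : ζ' = toY (w + PrY (θ j)) (β * tY (θ j)) := by
    apply Yn_ext
    · rw [hζdef, PrY_smul]
      simp only [PrY_toY]
      rw [hpz j, PrY_smul, smul_smul, inv_mul_cancel₀ (ne_of_gt (hs0 j)), one_smul]
      have : PrY (W + θ j) = w + PrY (θ j) := by rw [PrY_add]; simp [hWdef]
      rw [this]
    · rw [hζdef, tY_smul]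
      simp only [tY_toY]
      rw [hpz j, tY_smul]
      have h9 : tY (W + θ j) = tY (θ j) := by rw [tY_add]; simp [hWdef]
      rw [h9]
      have hsne : (s j) ≠ 0 := ne_of_gt (hs0 j)
      field_simp
  refine ⟨z j, hzK j, ζ', hζprox, hk1, ?_, ?_⟩
  · rw [hζeq]
    simp only [PrY_toY]
    have h0 : w + PrY (θ j) - (d - PrY v₀) = PrY (θ j) := by rw [hwdef]; abel
    rw [h0]
    exact le_of_lt hk2
  · rw [hζeq]
    simp only [tY_toY]
    exact le_of_lt hk3


end S1

/-- If `v₀` is in the metric projection of `d₁ = (d,1)` onto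
`T_K(y₀) ∩ (ℝⁿ × {1})`, then `d₁ - v₀ = (Pr ζ, 0)` for some limiting normal `ζ ∈ N_K(y₀)`. -/
theorem statement1 (n : ℕ) (K : Set (Yn n)) (hK : IsClosed K) (y₀ : Yn n) (hy₀ : y₀ ∈ K)
    (d : En n) (v₀ : Yn n)
    (hv₀ : v₀ ∈ metricProj (bouligandTangentCone K y₀ ∩ sliceOne n) (toY d 1)) :
    ∃ ζ ∈ limitingNormalCone K y₀, toY d 1 - v₀ = toY (PrY ζ) 0 := by
  classical
  obtain ⟨⟨hT, hs1⟩, hd⟩ := hv₀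
  have hv₀s : tY v₀ = 1 := hs1
  set w : En n := d - PrY v₀ with hwdef
  have hproj : ‖toY d 1 - v₀‖
      = infDist (toY d 1) (bouligandTangentCone K y₀ ∩ sliceOne n) := hd
  set CAx : ℝ := S1.CA d v₀ with hCAx
  set CBx : ℝ := S1.CB d v₀ with hCBx
  have hCA0 : 0 ≤ CAx := S1.CA_nonneg d v₀
  have hCB0 : 0 ≤ CBx := S1.CB_nonneg d v₀
  set βi : ℕ → ℝ := fun i => ‖w‖ + 2 + i with hβidef
  have hβige : ∀ i, ‖d - PrY v₀‖ + 2 ≤ βi i := by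
    intro i
    show ‖d - PrY v₀‖ + 2 ≤ ‖w‖ + 2 + i
    rw [← hwdef]
    have : (0:ℝ) ≤ i := Nat.cast_nonneg i
    linarith
  have hβi1 : ∀ i, (1:ℝ) ≤ βi i := by
    intro i
    have h1 := hβige i
    have h2 : (0:ℝ) ≤ ‖d - PrY v₀‖ := norm_nonneg _
    linarith
  set εi : ℕ → ℝ := fun i => 1/((i:ℝ)+1) with hεidef
  have hεi0 : ∀ i, 0 < εi i := by
    intro i
    show (0:ℝ) < 1/((i:ℝ)+1)
    positivity
  have hεi1 : ∀ i, εi i ≤ 1 := by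
    intro i
    show 1/((i:ℝ)+1) ≤ 1
    rw [div_le_one (by positivity)]
    have : (0:ℝ) ≤ i := Nat.cast_nonneg i
    linarith
  have hex : ∀ i, ∃ y' ∈ K, ∃ ζ' ∈ proxNormalCone K y', dist y' y₀ < εi i ∧
      ‖PrY ζ' - (d - PrY v₀)‖^2 ≤ S1.CB d v₀ / βi i + εi i ∧
      (tY ζ')^2 ≤ S1.CA d v₀ + εi i :=
    fun i => S1.heart hK hy₀ d v₀ hT hv₀s hproj (hβige i) (hεi0 i) (hεi1 i)
  choose y' hy'K ζ' hζ'prox hdist hhb htb using hex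
  set R : ℝ := ‖w‖ + (CBx + 2) + (CAx + 2) with hRdef
  have hζball : ∀ i, ζ' i ∈ closedBall (0 : Yn n) R := by
    intro i
    have h1 : ‖PrY (ζ' i) - w‖^2 ≤ CBx + 1 := by
      have h2 : S1.CB d v₀ / βi i ≤ CBx := by
        rw [hCBx]
        exact div_le_self hCB0 (hβi1 i)
      have h3 := hhb i
      rw [← hwdef] at h3
      linarith [hεi1 i]
    have h2 : ‖PrY (ζ' i) - w‖ ≤ CBx + 2 := by
      have := S1.le_add_one_of_sq_le (norm_nonneg _) h1
      linarith
    have h3 : ‖PrY (ζ' i)‖ ≤ ‖w‖ + (CBx + 2) := by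
      calc ‖PrY (ζ' i)‖ = ‖(PrY (ζ' i) - w) + w‖ := by rw [sub_add_cancel]
      _ ≤ ‖PrY (ζ' i) - w‖ + ‖w‖ := norm_add_le _ _
      _ ≤ ‖w‖ + (CBx + 2) := by linarith
    have h4 : |tY (ζ' i)|^2 ≤ CAx + 1 := by
      rw [sq_abs]
      have h5 := htb i
      rw [← hCAx] at h5
      linarith [hεi1 i]
    have h5 : |tY (ζ' i)| ≤ CAx + 2 := by
      have := S1.le_add_one_of_sq_le (abs_nonneg _) h4
      linarith
    rw [mem_closedBall, dist_zero_right]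
    calc ‖ζ' i‖ ≤ ‖PrY (ζ' i)‖ + |tY (ζ' i)| := S1.norm_Yn_le _
    _ ≤ R := by rw [hRdef]; linarith
  obtain ⟨ζ, hζmem, φ, hφ, hζφ⟩ :=
    tendsto_subseq_of_bounded isBounded_closedBall hζball
  have hφtop : Tendsto φ atTop atTop := hφ.tendsto_atTop
  have hφge : ∀ i, i ≤ φ i := fun i => hφ.le_apply
  have hεφ : ∀ i, εi (φ i) ≤ εi i := by
    intro i
    show 1/((φ i:ℝ)+1) ≤ 1/((i:ℝ)+1)
    apply one_div_le_one_div_of_le (by positivity)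
    have : (i:ℝ) ≤ φ i := Nat.cast_le.2 (hφge i)
    linarith
  have hεlim : Tendsto εi atTop (𝓝 0) := by
    have h := tendsto_one_div_add_atTop_nhds_zero_nat (𝕜 := ℝ)
    have h2 : εi = fun i : ℕ => 1/((i:ℝ)+1) := rfl
    rw [h2]
    exact h
  have hylim : Tendsto (fun i => y' (φ i)) atTop (𝓝 y₀) := by
    rw [tendsto_iff_dist_tendsto_zero]
    apply squeeze_zero (fun i => dist_nonneg) (g := fun i => εi i)
    · intro i
      exact le_trans (le_of_lt (hdist (φ i))) (hεφ i)
    · exact hεlim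
  have hζN : ζ ∈ limitingNormalCone K y₀ :=
    ⟨fun i => y' (φ i), fun i => ζ' (φ i), fun i => hy'K (φ i),
      fun i => hζ'prox (φ i), hylim, hζφ⟩
  have hPrζ : PrY ζ = w := by
    have hcont : Tendsto (fun i => ‖PrY (ζ' (φ i)) - w‖^2) atTop
        (𝓝 (‖PrY ζ - w‖^2)) := by
      have h1 : Tendsto (fun i => PrY (ζ' (φ i))) atTop (𝓝 (PrY ζ)) :=
        (S1.continuous_PrY.tendsto _).comp hζφ
      exact ((h1.sub_const w).norm.pow 2)
    have hβφlim : Tendsto (fun i => S1.CB d v₀ / βi i + εi i) atTop (𝓝 0) := by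
      have h1 : Tendsto βi atTop atTop := by
        have h2 : βi = fun i : ℕ => ‖w‖ + 2 + (i:ℝ) := rfl
        rw [h2]
        apply tendsto_atTop_add_const_left
        exact tendsto_natCast_atTop_atTop
      have h2 : Tendsto (fun i => S1.CB d v₀ / βi i) atTop (𝓝 0) :=
        Filter.Tendsto.div_atTop (tendsto_const_nhds (x := S1.CB d v₀)) h1
      simpa using h2.add hεlim
    have hub : ∀ i, ‖PrY (ζ' (φ i)) - w‖^2 ≤ S1.CB d v₀ / βi i + εi i := by
      intro i
      have h1 := hhb (φ i)
      rw [← hwdef] at h1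
      have h2 : S1.CB d v₀ / βi (φ i) ≤ S1.CB d v₀ / βi i := by
        apply div_le_div_of_nonneg_left (by rw [hCBx] at hCB0; exact hCB0)
        · have := hβi1 i; linarith
        · show βi i ≤ βi (φ i)
          show ‖w‖ + 2 + (i:ℝ) ≤ ‖w‖ + 2 + (φ i : ℝ)
          have : (i:ℝ) ≤ φ i := Nat.cast_le.2 (hφge i)
          linarith
      linarith [hεφ i]
    have hle : ‖PrY ζ - w‖^2 ≤ 0 :=
      le_of_tendsto_of_tendsto' hcont hβφlim hub
    have h0 : ‖PrY ζ - w‖ = 0 := by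
      have h1 : (0:ℝ) ≤ ‖PrY ζ - w‖ := norm_nonneg _
      nlinarith
    rw [← sub_eq_zero]
    exact norm_eq_zero.1 h0
  refine ⟨ζ, hζN, ?_⟩
  apply S1.Yn_ext
  · rw [hPrζ]
    simp [hwdef]
  · simp [hv₀s]
end
end

section
/- Let T ⊆ ℝⁿ × ℝ and T_m ⊆ ℝⁿ × ℝ (m ∈ ℕ) be cones, i.e., sets closed under multiplication by positive scalars. If T is contained in the Kuratowski lower limit of the sequence (T_m), then T ∩ (ℝⁿ × {1}) is contained in the Kuratowski lower limit of the sequence (T_m ∩ (ℝⁿ × {1})). -/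
open Set Filter Metric Topology

noncomputable section

/-- A set is a cone if it is closed under multiplication by positive scalars. -/
def IsCone {X : Type*} [SMul ℝ X] (A : Set X) : Prop :=
  ∀ a ∈ A, ∀ l : ℝ, 0 < l → l • a ∈ A

/-- Kuratowski lower limit of a sequence of sets: points `x` admitting `x m ∈ A m` for all
sufficiently large `m` with `x m → x`. -/
def kuratowskiLiminf {X : Type*} [TopologicalSpace X] (A : ℕ → Set X) : Set X :=
  {x | ∃ xs : ℕ → X, (∀ᶠ m in atTop, xs m ∈ A m) ∧ Tendsto xs atTop (𝓝 x)}

lemma tY_smul {n : ℕ} (l : ℝ) (y : Yn n) : tY (l • y) = l * tY y := rfl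

lemma tY_continuous {n : ℕ} : Continuous (tY (n := n)) :=
  (continuous_snd).comp (WithLp.prod_continuous_ofLp 2 (En n) ℝ)

/-- If the cone `T` lies in the Kuratowski lower limit of the cones `T_m`,
then `T ∩ (ℝⁿ × {1})` lies in the Kuratowski lower limit of the sets `T_m ∩ (ℝⁿ × {1})`. -/
theorem statement3 (n : ℕ) (T : Set (Yn n)) (Tm : ℕ → Set (Yn n))
    (hT : IsCone T) (hTm : ∀ m, IsCone (Tm m))
    (h : T ⊆ kuratowskiLiminf Tm) :
    T ∩ sliceOne n ⊆ kuratowskiLiminf (fun m => Tm m ∩ sliceOne n) := by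
  rintro y ⟨hyT, hy1⟩
  obtain ⟨xs, hmem, htend⟩ := h hyT
  have ht : Tendsto (fun m => tY (xs m)) atTop (𝓝 1) := by
    have := (tY_continuous.tendsto y).comp htend
    simpa [Function.comp_def, show tY y = 1 from hy1] using this
  have hpos : ∀ᶠ m in atTop, 0 < tY (xs m) :=
    ht.eventually (eventually_gt_nhds one_pos)
  refine ⟨fun m => (tY (xs m))⁻¹ • xs m, ?_, ?_⟩
  · filter_upwards [hmem, hpos] with m hm hp
    refine ⟨hTm m _ hm _ (inv_pos.2 hp), ?_⟩
    simp [sliceOne, tY_smul, inv_mul_cancel₀ hp.ne']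
  · have hinv : Tendsto (fun m => (tY (xs m))⁻¹) atTop (𝓝 1) := by
      simpa using ht.inv₀ one_ne_zero
    have := hinv.smul htend
    simpa using this
end
end

section
/- Let T ⊆ ℝⁿ × ℝ and T_m ⊆ ℝⁿ × ℝ (m ∈ ℕ) be cones (sets closed under multiplication by positive scalars) such that T is contained in the Kuratowski lower limit of the sequence (T_m), and suppose T ∩ (ℝⁿ × {1}) ≠ ∅. Then for every d ∈ ℝⁿ × ℝ, limsup_{m→∞} dist(d, T_m ∩ (ℝⁿ × {1})) ≤ dist(d, T ∩ (ℝⁿ × {1})); in particular T_m ∩ (ℝⁿ × {1}) ≠ ∅ for all sufficiently large m. -/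
open Set Filter Metric Topology

noncomputable section

/-- If the cone `T` lies in the Kuratowski lower limit of the cones `T_m`
and `T ∩ (ℝⁿ × {1}) ≠ ∅`, then for every `d`,
`limsup_m dist(d, T_m ∩ (ℝⁿ × {1})) ≤ dist(d, T ∩ (ℝⁿ × {1}))`; in particular
`T_m ∩ (ℝⁿ × {1}) ≠ ∅` for all sufficiently large `m`. -/
theorem statement4 (n : ℕ) (T : Set (Yn n)) (Tm : ℕ → Set (Yn n))
    (hT : IsCone T) (hTm : ∀ m, IsCone (Tm m))
    (h : T ⊆ kuratowskiLiminf Tm) (hne : (T ∩ sliceOne n).Nonempty) :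
    (∀ d : Yn n,
        Filter.limsup (fun m => infDist d (Tm m ∩ sliceOne n)) atTop ≤
          infDist d (T ∩ sliceOne n)) ∧
      ∀ᶠ m in atTop, (Tm m ∩ sliceOne n).Nonempty := by

  have main : ∀ y ∈ T ∩ sliceOne n, ∃ ys : ℕ → Yn n,
      (∀ᶠ m in atTop, ys m ∈ Tm m ∩ sliceOne n) ∧ Tendsto ys atTop (𝓝 y) := by
    rintro y ⟨hyT, hy1⟩
    obtain ⟨xs, hxs, hlim⟩ := h hyT
    have hy1' : tY y = 1 := hy1
    have ht : Tendsto (fun m => tY (xs m)) atTop (𝓝 1) := by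
      have := (tY_continuous.tendsto y).comp hlim
      rw [hy1'] at this
      exact this
    have hpos : ∀ᶠ m in atTop, 0 < tY (xs m) :=
      ht.eventually (eventually_gt_nhds one_pos)
    refine ⟨fun m => (tY (xs m))⁻¹ • xs m, ?_, ?_⟩
    · filter_upwards [hxs, hpos] with m hm hp
      refine ⟨hTm m _ hm _ (inv_pos.mpr hp), ?_⟩
      show tY ((tY (xs m))⁻¹ • xs m) = 1
      simp [tY_smul, inv_mul_cancel₀ (ne_of_gt hp)]
    · have h1 : Tendsto (fun m => (tY (xs m))⁻¹) atTop (𝓝 1) := by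
        simpa using ht.inv₀ one_ne_zero
      simpa using h1.smul hlim
  obtain ⟨x, hx⟩ := hne
  obtain ⟨ys0, hmem0, _⟩ := main x hx
  refine ⟨?_, hmem0.mono fun m hm => ⟨ys0 m, hm⟩⟩
  intro d
  have : Nonempty ↑(T ∩ sliceOne n) := ⟨⟨x, hx⟩⟩
  rw [infDist_eq_iInf]
  refine le_ciInf fun ⟨y, hy⟩ => ?_
  obtain ⟨ys, hmem, hyslim⟩ := main y hy
  have hdlim : Tendsto (fun m => dist d (ys m)) atTop (𝓝 (dist d y)) :=
    tendsto_const_nhds.dist hyslim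
  have hcb : IsCoboundedUnder (· ≤ ·) atTop (fun m => infDist d (Tm m ∩ sliceOne n)) :=
    isCoboundedUnder_le_of_le atTop (x := 0) fun m => infDist_nonneg
  have hle : ∀ᶠ m in atTop, infDist d (Tm m ∩ sliceOne n) ≤ dist d (ys m) := by
    filter_upwards [hmem] with m hm
    exact infDist_le_dist_of_mem hm
  calc Filter.limsup (fun m => infDist d (Tm m ∩ sliceOne n)) atTop
      ≤ Filter.limsup (fun m => dist d (ys m)) atTop :=
        limsup_le_limsup hle hcb hdlim.isBoundedUnder_le
    _ = dist d y := hdlim.limsup_eq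
end
end

section
/- Let c ∈ ℝⁿ, R ≥ 0, and let S be a subset of the closed ball of radius R centered at c. If z belongs to the closure of the convex hull of S and ‖z − c‖ = R, then z belongs to the closure of S. -/
open Set Metric
open scoped RealInnerProductSpace

/-- If `S` lies in the closed ball `B̄(c,R)` and `z` is a point of the
closure of the convex hull of `S` with `‖z - c‖ = R`, then `z ∈ closure S`. -/
theorem statement6 (n : ℕ) (c : EuclideanSpace ℝ (Fin n)) (R : ℝ) (hR : 0 ≤ R)
    (S : Set (EuclideanSpace ℝ (Fin n))) (hS : S ⊆ closedBall c R)
    (z : EuclideanSpace ℝ (Fin n)) (hz : z ∈ closure (convexHull ℝ S)) (hzR : ‖z - c‖ = R) :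
    z ∈ closure S := by
  by_contra hzS
  rw [Metric.mem_closure_iff] at hzS
  push_neg at hzS
  obtain ⟨ε, hε, hfar⟩ := hzS
  have hz2 : ‖z - c‖ ^ 2 = R ^ 2 := by rw [hzR]
  -- every point of S satisfies ⟪x, z - c⟫ ≤ a
  have key : ∀ x ∈ S, ⟪x, z - c⟫ ≤ (⟪c, z - c⟫) + R ^ 2 - ε ^ 2 / 2 := by
    intro x hx
    have hxc : ‖x - c‖ ≤ R := mem_closedBall_iff_norm.mp (hS hx)
    have hxz : ε ≤ ‖z - x‖ := by
      simpa [dist_eq_norm] using hfar x hx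
    have expand : ‖z - x‖ ^ 2 = ‖x - c‖ ^ 2 - 2 * (⟪x - c, z - c⟫) + ‖z - c‖ ^ 2 := by
      have h : z - x = (z - c) - (x - c) := by abel
      rw [h, norm_sub_sq_real, real_inner_comm]
      ring_nf
    have h1 : ε ^ 2 ≤ ‖z - x‖ ^ 2 := by
      apply pow_le_pow_left₀ (le_of_lt hε) hxz
    have h2 : ‖x - c‖ ^ 2 ≤ R ^ 2 :=
      pow_le_pow_left₀ (norm_nonneg _) hxc 2
    have hinner : ⟪x - c, z - c⟫ = (⟪x, z - c⟫) - ⟪c, z - c⟫ := by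
      rw [inner_sub_left]
    nlinarith
  -- the halfspace is convex and closed, so it contains closure (convexHull S)
  set a : ℝ := (⟪c, z - c⟫) + R ^ 2 - ε ^ 2 / 2 with ha
  have hconv : Convex ℝ {x : EuclideanSpace ℝ (Fin n) | ⟪x, z - c⟫ ≤ a} :=
    convex_halfSpace_le
      ⟨fun x y => inner_add_left x y (z - c), fun r x => real_inner_smul_left x (z - c) r⟩ a
  have hclosed : IsClosed {x : EuclideanSpace ℝ (Fin n) | ⟪x, z - c⟫ ≤ a} :=
    isClosed_le (Continuous.inner continuous_id continuous_const) continuous_const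
  have hsub : closure (convexHull ℝ S) ⊆ {x | ⟪x, z - c⟫ ≤ a} := by
    apply closure_minimal _ hclosed
    exact convexHull_min key hconv
  have hzin : (⟪z, z - c⟫) ≤ (⟪c, z - c⟫) + R ^ 2 - ε ^ 2 / 2 := hsub hz
  have hzv : (⟪z, z - c⟫) - ⟪c, z - c⟫ = R ^ 2 := by
    rw [← inner_sub_left, real_inner_self_eq_norm_sq, hzR]
  nlinarith [pow_pos hε 2]
end

section
/- Let C₀ ⊆ ℝⁿ be closed, d ∈ ℝⁿ, T > 0, and K := {(x,t) ∈ ℝⁿ × ℝ : t ∈ [0,T], x + t·d ∈ C₀}. Let χ ∈ C₀, t ∈ (0,T), and x := χ − t·d, so that y := (x,t) ∈ K. If w' belongs to the metric projection of d onto T_{C₀}(χ), then (w' − d, 1) belongs to the metric projection of the vector (0_{ℝⁿ}, 1) onto T_K(y) ∩ (ℝⁿ × {1}). -/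
open Set Filter Metric MeasureTheory Topology

noncomputable section

lemma le_infDistAux {X : Type*} [PseudoMetricSpace X] {s : Set X} (hs : s.Nonempty)
    {x : X} {b : ℝ} (h : ∀ y ∈ s, b ≤ dist x y) : b ≤ infDist x s := by
  have := hs.to_subtype
  rw [infDist_eq_iInf]
  exact le_ciInf fun y => h y y.2

lemma normY {n : ℕ} (a b : En n) (s : ℝ) : ‖toY a s - toY b s‖ = ‖a - b‖ := by
  rw [WithLp.prod_norm_eq_of_L2]
  have h1 : (toY a s - toY b s).fst = a - b := rfl
  have h2 : (toY a s - toY b s).snd = (0 : ℝ) := by show s - s = 0; ring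
  rw [h1, h2]
  simp [Real.sqrt_sq_eq_abs]

lemma contToY {n : ℕ} (d : En n) : Continuous (fun z : En n => toY (z - d) 1) :=
  (WithLp.prod_continuous_toLp 2 (En n) ℝ).comp
    ((continuous_id.sub continuous_const).prodMk continuous_const)

/-- For `K = {(x,t) : t ∈ [0,T], x + t·d ∈ C₀}`, `χ ∈ C₀`, `t ∈ (0,T)` and
`x := χ - t·d`: if `w'` is in the metric projection of `d` onto `T_{C₀}(χ)`, then
`(w' - d, 1)` is in the metric projection of `(0,1)` onto `T_K(x,t) ∩ (ℝⁿ × {1})`. -/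
theorem statement9 (n : ℕ) (C₀ : Set (En n)) (hC₀ : IsClosed C₀) (d : En n) (T : ℝ)
    (hT : 0 < T) (K : Set (Yn n))
    (hK : K = {y | tY y ∈ Icc (0:ℝ) T ∧ PrY y + tY y • d ∈ C₀})
    (χ : En n) (hχ : χ ∈ C₀) (t : ℝ) (ht : t ∈ Ioo (0:ℝ) T)
    (x : En n) (hx : x = χ - t • d)
    (w' : En n) (hw' : w' ∈ metricProj (bouligandTangentCone C₀ χ) d) :
    toY (w' - d) 1 ∈
      metricProj (bouligandTangentCone K (toY x t) ∩ sliceOne n) (toY 0 1) := by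
  obtain ⟨hw'T, hw'n⟩ := hw'
  obtain ⟨ht0, htT⟩ := ht
  set A := bouligandTangentCone C₀ χ with hA
  have hχeq : x + t • d = χ := by rw [hx]; module
  -- the tangent cone to K at (x,t), intersected with the slice, is the image of A
  have hset : bouligandTangentCone K (toY x t) ∩ sliceOne n
      = (fun u : En n => toY (u - d) 1) '' A := by
    ext v
    constructor
    · rintro ⟨⟨s, w, hs, hs0, hwv, hmem⟩, hv1⟩
      refine ⟨PrY v + d, ⟨s, fun k => PrY (w k) + tY (w k) • d, hs, hs0, ?_, ?_⟩, ?_⟩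
      · have h1 : Tendsto (fun k => PrY (w k)) atTop (𝓝 (PrY v)) :=
          (((WithLp.prodContinuousLinearEquiv 2 ℝ (En n) ℝ).continuous).fst.tendsto v).comp hwv
        have h2 : Tendsto (fun k => tY (w k)) atTop (𝓝 (tY v)) :=
          (((WithLp.prodContinuousLinearEquiv 2 ℝ (En n) ℝ).continuous).snd.tendsto v).comp hwv
        rw [hv1] at h2
        have := h1.add (h2.smul_const d)
        simpa using this
      · intro k
        have := hmem k
        rw [hK] at this
        have h2 := this.2
        have heq : PrY (toY x t + s k • w k) + tY (toY x t + s k • w k) • d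
            = χ + s k • (PrY (w k) + tY (w k) • d) := by
          show (x + s k • PrY (w k)) + (t + s k * tY (w k)) • d = _
          rw [← hχeq]; module
        rwa [heq] at h2
      · show toY (PrY v + d - d) 1 = v
        rw [add_sub_cancel_right, ← hv1]
        rfl
    · rintro ⟨u, ⟨s, w, hs, hs0, hwu, hmem⟩, rfl⟩
      have hTt : (0:ℝ) < T - t := by linarith
      have hev : ∀ᶠ k in atTop, s k < T - t := hs0.eventually_lt_const hTt
      obtain ⟨N, hN⟩ := eventually_atTop.mp hev
      refine ⟨⟨fun k => s (k + N), fun k => toY (w (k + N) - d) 1,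
        fun k => hs _, hs0.comp (tendsto_add_atTop_nat N),
        ((contToY d).tendsto u).comp (hwu.comp (tendsto_add_atTop_nat N)), ?_⟩, rfl⟩
      intro k
      rw [hK]
      have hlt : s (k + N) < T - t := hN _ (Nat.le_add_left N k)
      constructor
      · show t + s (k + N) * 1 ∈ Icc (0:ℝ) T
        constructor
        · have := hs (k + N); nlinarith
        · nlinarith
      · show (x + s (k + N) • (w (k + N) - d)) + (t + s (k + N) * 1) • d ∈ C₀
        have heq : (x + s (k + N) • (w (k + N) - d)) + (t + s (k + N) * 1) • d
            = χ + s (k + N) • w (k + N) := by rw [← hχeq]; module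
        rw [heq]
        exact hmem _
  have hAne : A.Nonempty := by
    refine ⟨0, fun k => 1 / (k + 1), fun _ => 0, fun k => by positivity,
      tendsto_one_div_add_atTop_nhds_zero_nat, tendsto_const_nhds, fun k => ?_⟩
    simpa using hχ
  have hdist : ∀ u : En n, dist (toY (0 : En n) 1) (toY (u - d) 1) = dist d u := by
    intro u
    rw [dist_eq_norm, dist_eq_norm, normY]
    congr 1
    abel
  have hinf : infDist (toY (0 : En n) 1) ((fun u : En n => toY (u - d) 1) '' A)
      = infDist d A := by
    apply le_antisymm
    · apply le_infDistAux hAne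
      intro u hu
      rw [← hdist u]
      exact infDist_le_dist_of_mem ⟨u, hu, rfl⟩
    · apply le_infDistAux (hAne.image _)
      rintro z ⟨u, hu, rfl⟩
      rw [hdist u]
      exact infDist_le_dist_of_mem hu
  constructor
  · rw [hset]
    exact ⟨w', hw'T, rfl⟩
  · rw [hset, hinf, ← hw'n]
    rw [show (toY (0 : En n) 1 : Yn n) = toY 0 1 from rfl]
    calc ‖toY (0 : En n) 1 - toY (w' - d) 1‖ = ‖(0 : En n) - (w' - d)‖ := normY _ _ _
      _ = ‖d - w'‖ := by congr 1; abel
end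
end

section
/- Let C₀ ⊆ ℝⁿ be closed, d ∈ ℝⁿ, T > 0, and K := {(x,t) ∈ ℝⁿ × ℝ : t ∈ [0,T], x + t·d ∈ C₀}. Let G be the multivalued map whose graph is the closure of the graph of χ ↦ Proj_{T_{C₀}(χ)}(d) (χ ranging over C₀), and let G₁ be the multivalued map whose graph is the closure of the graph of (x,t) ↦ Proj_{T_K(x,t) ∩ (ℝⁿ × {1})}((0_{ℝⁿ},1)) ((x,t) ranging over K). If χ : [0,T] → C₀ is absolutely continuous and satisfies χ̇(t) ∈ G(χ(t)) for almost every t ∈ [0,T], then the function x(t) := χ(t) − t·d satisfies (ẋ(t), 1) ∈ G₁(x(t), t) for almost every t ∈ (0,T). -/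
open Set Filter Metric MeasureTheory Topology

noncomputable section

/-- `x`, with a.e. derivative `v`, is absolutely continuous on `[0,T]`. -/
def IsAC {X : Type*} [NormedAddCommGroup X] [NormedSpace ℝ X]
    (x v : ℝ → X) (T : ℝ) : Prop :=
  IntegrableOn v (Icc 0 T) volume ∧ ∀ t ∈ Icc (0:ℝ) T, x t = x 0 + ∫ s in (0:ℝ)..t, v s


section Aux

open Metric

variable {n : ℕ}

lemma PrY_toY (x : En n) (t : ℝ) : PrY (toY x t) = x := rfl
lemma tY_toY (x : En n) (t : ℝ) : tY (toY x t) = t := rfl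
lemma toY_eta (y : Yn n) : toY (PrY y) (tY y) = y := rfl
lemma toY_add (a b : En n) (s u : ℝ) : toY a s + toY b u = toY (a + b) (s + u) := rfl
lemma toY_sub (a b : En n) (s u : ℝ) : toY a s - toY b u = toY (a - b) (s - u) := rfl
lemma smul_toY (r : ℝ) (a : En n) (s : ℝ) : r • toY a s = toY (r • a) (r * s) := rfl

lemma continuous_toY : Continuous (fun p : En n × ℝ => toY p.1 p.2) :=
  (WithLp.prodContinuousLinearEquiv 2 ℝ (En n) ℝ).symm.continuous

lemma continuous_PrY : Continuous (PrY (n := n)) :=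
  continuous_fst.comp (WithLp.prodContinuousLinearEquiv 2 ℝ (En n) ℝ).continuous

lemma continuous_tY : Continuous (tY (n := n)) :=
  continuous_snd.comp (WithLp.prodContinuousLinearEquiv 2 ℝ (En n) ℝ).continuous

lemma norm_toY_zero (a : En n) : ‖toY a (0:ℝ)‖ = ‖a‖ := by
  rw [WithLp.prod_norm_eq_of_L2]
  show √(‖a‖ ^ 2 + ‖(0:ℝ)‖ ^ 2) = ‖a‖
  rw [norm_zero]
  simp [Real.sqrt_sq (norm_nonneg a)]

lemma dist_slice (d a : En n) :
    dist (toY (0 : En n) (1:ℝ)) (toY (a - d) 1) = dist d a := by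
  rw [dist_eq_norm, dist_eq_norm, toY_sub]
  have h1 : (0 : En n) - (a - d) = d - a := by abel
  have h2 : (1:ℝ) - 1 = 0 := by ring
  rw [h1, h2, norm_toY_zero]

lemma infDist_image_of_dist_eq {X Y : Type*} [MetricSpace X] [MetricSpace Y]
    {f : X → Y} {c : Y} {x : X} (hf : ∀ a, dist c (f a) = dist x a) (A : Set X) :
    infDist c (f '' A) = infDist x A := by
  rcases A.eq_empty_or_nonempty with rfl | hA
  · simp
  apply le_antisymm
  · by_contra h
    push_neg at h
    obtain ⟨y, hy, hlt⟩ := (infDist_lt_iff hA).1 h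
    exact absurd ((infDist_le_dist_of_mem (mem_image_of_mem f hy)).trans_eq (hf y))
      (not_le.2 hlt)
  · by_contra h
    push_neg at h
    obtain ⟨z, hz, hlt⟩ := (infDist_lt_iff (hA.image f)).1 h
    obtain ⟨a, ha, rfl⟩ := hz
    rw [hf a] at hlt
    exact absurd (infDist_le_dist_of_mem ha) (not_le.2 hlt)

lemma metricProj_image (d : En n) (A : Set (En n)) {p : En n}
    (hp : p ∈ metricProj A d) :
    toY (p - d) 1 ∈ metricProj ((fun u => toY (u - d) 1) '' A) (toY 0 1) := by
  obtain ⟨hpA, hpn⟩ := hp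
  refine ⟨mem_image_of_mem _ hpA, ?_⟩
  rw [infDist_image_of_dist_eq (fun a => dist_slice d a) A, ← dist_eq_norm, dist_slice,
    dist_eq_norm, hpn]

lemma tangentCone_slice (C₀ : Set (En n)) (d : En n) (T : ℝ) (K : Set (Yn n))
    (hK : K = {y | tY y ∈ Icc (0:ℝ) T ∧ PrY y + tY y • d ∈ C₀})
    {t : ℝ} (ht : t ∈ Ioo (0:ℝ) T) (x : En n) :
    bouligandTangentCone K (toY x t) ∩ sliceOne n
      = (fun u => toY (u - d) 1) '' bouligandTangentCone C₀ (x + t • d) := by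
  ext y
  constructor
  · rintro ⟨⟨τ, w, hτpos, hτ0, hw, hmem⟩, hy1⟩
    have hy1' : tY y = 1 := hy1
    refine ⟨PrY y + d, ⟨τ, fun k => PrY (w k) + tY (w k) • d, hτpos, hτ0, ?_, ?_⟩, ?_⟩
    · have h1 : Tendsto (fun k => PrY (w k)) atTop (𝓝 (PrY y)) :=
        (continuous_PrY.tendsto _).comp hw
      have h2 : Tendsto (fun k => tY (w k) • d) atTop (𝓝 (tY y • d)) :=
        ((continuous_tY.tendsto _).comp hw).smul tendsto_const_nhds
      have := h1.add h2
      rwa [hy1', one_smul] at this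
    · intro k
      have hm := hmem k
      rw [hK] at hm
      have hm2 := hm.2
      have hPr : PrY (toY x t + τ k • w k) = x + τ k • PrY (w k) := rfl
      have htt : tY (toY x t + τ k • w k) = t + τ k * tY (w k) := rfl
      rw [hPr, htt] at hm2
      have heq : x + t • d + τ k • (PrY (w k) + tY (w k) • d)
          = x + τ k • PrY (w k) + (t + τ k * tY (w k)) • d := by
        module
      rwa [heq]
    · show toY (PrY y + d - d) 1 = y
      rw [add_sub_cancel_right, ← hy1']
      exact toY_eta y
  · rintro ⟨u, ⟨τ, uk, hpos, h0, hu, hmemC⟩, rfl⟩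
    have hε : (0:ℝ) < min t (T - t) := lt_min ht.1 (by linarith [ht.2])
    obtain ⟨N, hN⟩ := (Filter.eventually_atTop).1 (h0.eventually (gt_mem_nhds hε))
    constructor
    · refine ⟨fun k => τ (k + N), fun k => toY (uk (k + N) - d) 1,
        fun k => hpos _, h0.comp (tendsto_add_atTop_nat N), ?_, ?_⟩
      · have : Tendsto (fun k => (uk (k + N) - d, (1:ℝ))) atTop (𝓝 (u - d, 1)) :=
          ((hu.comp (tendsto_add_atTop_nat N)).sub tendsto_const_nhds).prodMk_nhds
            tendsto_const_nhds
        exact (continuous_toY.tendsto _).comp this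
      · intro k
        have hτlt : τ (k + N) < min t (T - t) := hN (k + N) (Nat.le_add_left N k)
        rw [hK]
        have heq : toY x t + τ (k + N) • toY (uk (k + N) - d) 1
            = toY (x + τ (k + N) • (uk (k + N) - d)) (t + τ (k + N) * 1) := by
          rw [smul_toY, toY_add]
        rw [heq]
        constructor
        · show t + τ (k + N) * 1 ∈ Icc (0:ℝ) T
          have h1 := hpos (k + N)
          have h2 := (lt_min_iff.1 hτlt).2
          constructor <;> [nlinarith [ht.1]; nlinarith]
        · show x + τ (k + N) • (uk (k + N) - d) + (t + τ (k + N) * 1) • d ∈ C₀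
          have heq2 : x + τ (k + N) • (uk (k + N) - d) + (t + τ (k + N) * 1) • d
              = x + t • d + τ (k + N) • uk (k + N) := by
            module
          rw [heq2]
          exact hmemC (k + N)
    · show tY (toY (u - d) 1) = 1
      rfl

end Aux

/-- Let `K = {(x,t) : t ∈ [0,T], x + t·d ∈ C₀}`, let `G` be the closure of
the graph of `χ ↦ Proj_{T_{C₀}(χ)}(d)` on `C₀`, and `G₁` the closure of the graph of
`(x,t) ↦ Proj_{T_K(x,t) ∩ (ℝⁿ × {1})}((0,1))` on `K`. If the absolutely continuous curve `χ`
stays in `C₀` and satisfies `χ̇(t) ∈ G(χ(t))` a.e. on `[0,T]`, then `x(t) := χ(t) - t·d`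
satisfies `(ẋ(t),1) ∈ G₁(x(t),t)` a.e. on `(0,T)`. -/
theorem statement10 (n : ℕ) (C₀ : Set (En n)) (hC₀ : IsClosed C₀) (d : En n) (T : ℝ)
    (hT : 0 < T) (K : Set (Yn n))
    (hK : K = {y | tY y ∈ Icc (0:ℝ) T ∧ PrY y + tY y • d ∈ C₀})
    (χ v : ℝ → En n) (hAC : IsAC χ v T) (hmem : ∀ t ∈ Icc (0:ℝ) T, χ t ∈ C₀)
    (hsol : ∀ᵐ t ∂(volume.restrict (Icc (0:ℝ) T)),
      (χ t, v t) ∈ closure {p : En n × En n |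
        p.1 ∈ C₀ ∧ p.2 ∈ metricProj (bouligandTangentCone C₀ p.1) d}) :
    ∀ᵐ t ∂(volume.restrict (Ioo (0:ℝ) T)),
      (toY (χ t - t • d) t, toY (v t - d) 1) ∈ closure {q : Yn n × Yn n |
        q.1 ∈ K ∧
        q.2 ∈ metricProj (bouligandTangentCone K q.1 ∩ sliceOne n) (toY 0 1)} := by
  have h2 := ae_restrict_of_ae_restrict_of_subset Ioo_subset_Icc_self hsol
  filter_upwards [h2, ae_restrict_mem measurableSet_Ioo] with t ht htI
  set Ψ : En n × En n → Yn n × Yn n :=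
    fun p => (toY (p.1 - t • d) t, toY (p.2 - d) 1) with hΨdef
  have hΨcont : Continuous Ψ := by
    apply Continuous.prodMk
    · exact continuous_toY.comp ((continuous_fst.sub continuous_const).prodMk
        continuous_const)
    · exact continuous_toY.comp ((continuous_snd.sub continuous_const).prodMk
        continuous_const)
  have hmaps : MapsTo Ψ
      {p : En n × En n | p.1 ∈ C₀ ∧ p.2 ∈ metricProj (bouligandTangentCone C₀ p.1) d}
      {q : Yn n × Yn n | q.1 ∈ K ∧
        q.2 ∈ metricProj (bouligandTangentCone K q.1 ∩ sliceOne n) (toY 0 1)} := by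
    rintro ⟨p₁, p₂⟩ ⟨hp₁, hp₂⟩
    have hcancel : p₁ - t • d + t • d = p₁ := sub_add_cancel p₁ (t • d)
    constructor
    · rw [hK]
      refine ⟨⟨le_of_lt htI.1, le_of_lt htI.2⟩, ?_⟩
      show p₁ - t • d + t • d ∈ C₀
      rw [hcancel]; exact hp₁
    · show toY (p₂ - d) 1 ∈ metricProj
        (bouligandTangentCone K (toY (p₁ - t • d) t) ∩ sliceOne n) (toY 0 1)
      rw [tangentCone_slice C₀ d T K hK htI (p₁ - t • d), hcancel]
      exact metricProj_image d _ hp₂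
  exact hmaps.closure hΨcont ht
end
end

section
/- Let a > 0 and b > 0, and define K := {(x,0) : x ≤ a} ∪ {(x,b) : x ≤ a} ∪ {(0,y) : y ≤ 0} ∪ {(a,y) : y ≤ b} ⊆ ℝ². Then for every point p ∈ K with p ≠ (a,b), the cone of limiting normals N_K(p) is contained in (ℝ × {0}) ∪ ({0} × ℝ), the set of vectors lying along the coordinate axes. -/
open Set Filter Metric MeasureTheory Topology

noncomputable section

/-- The "base cell" `K ⊆ ℝ²` of the example. -/
def baseCell (a b : ℝ) : Set (EuclideanSpace ℝ (Fin 2)) :=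
  {p | (p 1 = 0 ∧ p 0 ≤ a) ∨ (p 1 = b ∧ p 0 ≤ a) ∨
       (p 0 = 0 ∧ p 1 ≤ 0) ∨ (p 0 = a ∧ p 1 ≤ b)}

open scoped RealInnerProductSpace

private lemma prox_aux {E : Type*} [NormedAddCommGroup E] [InnerProductSpace ℝ E]
    {K : Set E} {q e ζ : E} (he : ‖e‖ = 1) {ε : ℝ} (hε : 0 < ε)
    (hmem : ∀ s : ℝ, |s| ≤ ε → q + s • e ∈ K)
    (hζ : ζ ∈ proxNormalCone K q) (hc : 0 < (inner ℝ ζ e : ℝ)) : False := by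
  obtain ⟨t, ht, hinf⟩ := hζ
  set c : ℝ := (inner ℝ ζ e : ℝ) with hcdef
  set s : ℝ := min ε (t * c) with hsdef
  have hs0 : 0 < s := lt_min hε (mul_pos ht hc)
  have hmem' : q + s • e ∈ K := hmem s (by rw [abs_of_pos hs0]; exact min_le_left _ _)
  have h1 : Metric.infDist (q + t • ζ) K ≤ ‖t • ζ - s • e‖ := by
    have h := Metric.infDist_le_dist_of_mem (x := q + t • ζ) hmem'
    rwa [dist_eq_norm, add_sub_add_left_eq_sub] at h
  have hst : s ≤ t * c := min_le_right _ _
  have h2 : ‖t • ζ - s • e‖ ^ 2 < (t * ‖ζ‖) ^ 2 := by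
    rw [norm_sub_sq_real, real_inner_smul_left, real_inner_smul_right,
      norm_smul, norm_smul, he, Real.norm_eq_abs, Real.norm_eq_abs,
      abs_of_pos ht, abs_of_pos hs0]
    rw [← hcdef]
    nlinarith [hs0, ht, hc, hst]
  have h3 : ‖t • ζ - s • e‖ < t * ‖ζ‖ :=
    lt_of_pow_lt_pow_left₀ 2 (by positivity) h2
  rw [hinf] at h1
  linarith

private lemma prox_perp {E : Type*} [NormedAddCommGroup E] [InnerProductSpace ℝ E]
    {K : Set E} {q e ζ : E} (he : ‖e‖ = 1) {ε : ℝ} (hε : 0 < ε)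
    (hmem : ∀ s : ℝ, |s| ≤ ε → q + s • e ∈ K)
    (hζ : ζ ∈ proxNormalCone K q) : (inner ℝ ζ e : ℝ) = 0 := by
  by_contra hc
  rcases lt_or_gt_of_ne hc with hneg | hpos
  · refine prox_aux (e := -e) (by rw [norm_neg, he]) hε (fun s hs => ?_) hζ ?_
    · have := hmem (-s) (by rwa [abs_neg])
      simpa [neg_smul, smul_neg] using this
    · rw [inner_neg_right]; linarith
  · exact prox_aux he hε hmem hζ hpos

private lemma prox_prod (a b : ℝ) (ha : 0 < a) (hb : 0 < b)
    {q ζ : EuclideanSpace ℝ (Fin 2)} (hq : q ∈ baseCell a b) (hq' : q ≠ ![a, b])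
    (hζ : ζ ∈ proxNormalCone (baseCell a b) q) : ζ 0 * ζ 1 = 0 := by
  have hinner0 : (inner ℝ ζ (EuclideanSpace.single (0 : Fin 2) (1 : ℝ)) : ℝ) = ζ 0 := by
    simp [EuclideanSpace.inner_single_right]
  have hinner1 : (inner ℝ ζ (EuclideanSpace.single (1 : Fin 2) (1 : ℝ)) : ℝ) = ζ 1 := by
    simp [EuclideanSpace.inner_single_right]
  have hnorm : ∀ i : Fin 2, ‖EuclideanSpace.single i (1 : ℝ)‖ = 1 := by
    intro i; simp [EuclideanSpace.norm_single]
  have hcoord : ∀ (s : ℝ) (i j : Fin 2),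
      (q + s • EuclideanSpace.single i (1 : ℝ)) j = q j + s * (if j = i then 1 else 0) := by
    intro s i j
    simp [EuclideanSpace.single_apply]
  -- helper to conclude ζ 0 = 0 from a horizontal interval
  have horiz : ∀ ε : ℝ, 0 < ε →
      (∀ s : ℝ, |s| ≤ ε → q + s • EuclideanSpace.single (0 : Fin 2) (1 : ℝ) ∈ baseCell a b) →
      ζ 0 * ζ 1 = 0 := by
    intro ε hε hmem
    have := prox_perp (hnorm 0) hε hmem hζ
    rw [hinner0] at this; rw [this, zero_mul]
  have vert : ∀ ε : ℝ, 0 < ε →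
      (∀ s : ℝ, |s| ≤ ε → q + s • EuclideanSpace.single (1 : Fin 2) (1 : ℝ) ∈ baseCell a b) →
      ζ 0 * ζ 1 = 0 := by
    intro ε hε hmem
    have := prox_perp (hnorm 1) hε hmem hζ
    rw [hinner1] at this; rw [this, mul_zero]
  rcases hq with ⟨h1, h0⟩ | ⟨h1, h0⟩ | ⟨h0, h1⟩ | ⟨h0, h1⟩
  · -- q 1 = 0, q 0 ≤ a
    rcases lt_or_eq_of_le h0 with h0' | h0'
    · refine horiz (a - q 0) (by linarith) (fun s hs => ?_)
      left
      constructor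
      · rw [hcoord]; simp [h1]
      · rw [hcoord]; simp; have := abs_le.1 hs; linarith [this.2]
    · -- q = (a, 0): vertical segment through it
      refine vert b hb (fun s hs => ?_)
      right; right; right
      constructor
      · rw [hcoord]; simp [h0']
      · rw [hcoord]; simp [h1]; have := abs_le.1 hs; linarith [this.2]
  · -- q 1 = b, q 0 ≤ a
    rcases lt_or_eq_of_le h0 with h0' | h0'
    · refine horiz (a - q 0) (by linarith) (fun s hs => ?_)
      right; left
      constructor
      · rw [hcoord]; simp [h1]
      · rw [hcoord]; simp; have := abs_le.1 hs; linarith [this.2]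
    · exact absurd (funext fun i => by fin_cases i <;> simp [h0', h1]) hq'
  · -- q 0 = 0, q 1 ≤ 0
    rcases lt_or_eq_of_le h1 with h1' | h1'
    · refine vert (-(q 1)) (by linarith) (fun s hs => ?_)
      right; right; left
      constructor
      · rw [hcoord]; simp [h0]
      · rw [hcoord]; simp; have := abs_le.1 hs; linarith [this.2]
    · refine horiz a ha (fun s hs => ?_)
      left
      constructor
      · rw [hcoord]; simp [h1']
      · rw [hcoord]; simp [h0]; have := abs_le.1 hs; linarith [this.2]
  · -- q 0 = a, q 1 ≤ b
    rcases lt_or_eq_of_le h1 with h1' | h1'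
    · refine vert (b - q 1) (by linarith) (fun s hs => ?_)
      right; right; right
      constructor
      · rw [hcoord]; simp [h0]
      · rw [hcoord]; simp; have := abs_le.1 hs; linarith [this.2]
    · exact absurd (funext fun i => by fin_cases i <;> simp [h0, h1']) hq'

/-- At every point of the base cell other than the vertex `(a,b)`, the cone
of limiting normals is contained in the union of the two coordinate axes. -/
theorem statement13 (a b : ℝ) (ha : 0 < a) (hb : 0 < b)
    (p : EuclideanSpace ℝ (Fin 2)) (hp : p ∈ baseCell a b)
    (hpv : p ≠ ![a, b]) :
    limitingNormalCone (baseCell a b) p ⊆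
      {ζ : EuclideanSpace ℝ (Fin 2) | ζ 1 = 0} ∪ {ζ | ζ 0 = 0} := by
  intro ζ hζ
  obtain ⟨yk, ζk, hmemK, hprox, hy, hz⟩ := hζ
  have hev : ∀ᶠ k in atTop, (yk k).ofLp ≠ ![a, b] := by
    have hne : p ≠ WithLp.toLp 2 ![a, b] := fun h => hpv (by rw [h])
    filter_upwards [hy (compl_singleton_mem_nhds hne)] with k hk h
    exact hk (congrArg (WithLp.toLp 2) h)
  have hev2 : ∀ᶠ k in atTop, ζk k 0 * ζk k 1 = 0 :=
    hev.mono fun k hk => prox_prod a b ha hb (hmemK k) hk (hprox k)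
  have h0 : Tendsto (fun k => ζk k 0) atTop (𝓝 (ζ 0)) :=
    ((EuclideanSpace.proj (0 : Fin 2)).continuous.tendsto ζ).comp hz
  have h1 : Tendsto (fun k => ζk k 1) atTop (𝓝 (ζ 1)) :=
    ((EuclideanSpace.proj (1 : Fin 2)).continuous.tendsto ζ).comp hz
  have hprod : ζ 0 * ζ 1 = 0 :=
    tendsto_nhds_unique (((h0.mul h1).congr' hev2)) tendsto_const_nhds
  rcases mul_eq_zero.1 hprod with h | h
  · exact Or.inr h
  · exact Or.inl h
end
end

section
/- Let a > 0 and b > 0, and define K := {(x,0) : x ≤ a} ∪ {(x,b) : x ≤ a} ∪ {(0,y) : y ≤ 0} ∪ {(a,y) : y ≤ b} ⊆ ℝ². Then for every point p ∈ K with p ≠ (a,b), the metric projection of the vector (1,1) onto the Bouligand tangent cone T_K(p) is nonempty and contained in the two-element set {(1,0), (0,1)}. -/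
open Set Filter Metric MeasureTheory Topology

noncomputable section

namespace S14

def d2 : EuclideanSpace ℝ (Fin 2) := !₂[1,1]
def e0 : EuclideanSpace ℝ (Fin 2) := !₂[1,0]
def e1 : EuclideanSpace ℝ (Fin 2) := !₂[0,1]

lemma coord_add_smul (p w : EuclideanSpace ℝ (Fin 2)) (t : ℝ) (i : Fin 2) :
    (p + t • w) i = p i + t * w i := rfl

lemma norm_sq (u : EuclideanSpace ℝ (Fin 2)) : ‖u‖^2 = u 0^2 + u 1^2 := by
  rw [EuclideanSpace.norm_eq, Real.sq_sqrt (by positivity)]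
  simp [Fin.sum_univ_two, sq_abs]

lemma mem_cone (K : Set (EuclideanSpace ℝ (Fin 2))) (p v : EuclideanSpace ℝ (Fin 2))
    (ε : ℝ) (hε : 0 < ε) (h : ∀ t : ℝ, 0 < t → t ≤ ε → p + t • v ∈ K) :
    v ∈ bouligandTangentCone K p := by
  refine ⟨fun k => ε / (k + 1), fun _ => v, fun k => by positivity, ?_, tendsto_const_nhds,
    fun k => h _ (by positivity) ?_⟩
  · simpa [div_eq_mul_inv] using tendsto_one_div_add_atTop_nhds_zero_nat.const_mul ε
  · exact div_le_self hε.le (by exact_mod_cast Nat.one_le_iff_ne_zero.mpr (Nat.succ_ne_zero k))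

lemma coord_tendsto (w : ℕ → EuclideanSpace ℝ (Fin 2)) (v : EuclideanSpace ℝ (Fin 2))
    (h : Tendsto w atTop (𝓝 v)) (i : Fin 2) :
    Tendsto (fun k => w k i) atTop (𝓝 (v i)) :=
  ((EuclideanSpace.proj i : EuclideanSpace ℝ (Fin 2) →L[ℝ] ℝ).continuous.tendsto _).comp h

/-- Family A: at points with `p 1 ∈ {0, b}` and `p 0 ≠ a`, tangent vectors have `v 1 ≤ 0`. -/
lemma coneA (a b : ℝ) (hb : 0 < b) (p : EuclideanSpace ℝ (Fin 2))
    (hp1 : p 1 = 0 ∨ p 1 = b) (hp0 : p 0 ≠ a)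
    (v : EuclideanSpace ℝ (Fin 2)) (hv : v ∈ bouligandTangentCone (baseCell a b) p) :
    v 1 ≤ 0 := by
  obtain ⟨t, w, ht, htlim, hwlim, hmem⟩ := hv
  have hw0 := coord_tendsto w v hwlim 0
  have hw1 := coord_tendsto w v hwlim 1
  have htw1 : Tendsto (fun k => t k * w k 1) atTop (𝓝 0) := by
    simpa using htlim.mul hw1
  have htw0 : Tendsto (fun k => p 0 + t k * w k 0) atTop (𝓝 (p 0)) := by
    simpa using tendsto_const_nhds.add (htlim.mul hw0)
  have E2 : ∀ᶠ k in atTop, p 0 + t k * w k 0 ≠ a := htw0.eventually_ne hp0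
  have E1 : ∀ᶠ k in atTop, t k * w k 1 < b := htw1.eventually_lt_const hb
  have E1' : ∀ᶠ k in atTop, -b < t k * w k 1 := htw1.eventually_const_lt (by linarith)
  have key : ∀ᶠ k in atTop, w k 1 ≤ 0 := by
    filter_upwards [E1, E1', E2] with k h1 h1' h2
    have hm := hmem k
    simp only [baseCell, Set.mem_setOf_eq, coord_add_smul] at hm
    rcases hp1 with hp | hp <;> rw [hp] at hm <;>
      rcases hm with ⟨hA, _⟩ | ⟨hA, _⟩ | ⟨_, hA⟩ | ⟨hA, _⟩
    · -- p1 = 0: 0 + t*w1 = 0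
      nlinarith [ht k]
    · linarith
    · nlinarith [ht k]
    · exact absurd hA h2
    · linarith
    · nlinarith [ht k]
    · linarith
    · exact absurd hA h2
  exact le_of_tendsto hw1 key

/-- Family B: tangent vectors have `v 0 ≤ 0`. -/
lemma coneB (a b : ℝ) (ha : 0 < a) (p : EuclideanSpace ℝ (Fin 2))
    (hp0 : p 0 = a ∨ (p 0 = 0 ∧ p 1 ≠ 0 ∧ p 1 ≠ b))
    (v : EuclideanSpace ℝ (Fin 2)) (hv : v ∈ bouligandTangentCone (baseCell a b) p) :
    v 0 ≤ 0 := by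
  obtain ⟨t, w, ht, htlim, hwlim, hmem⟩ := hv
  have hw0 := coord_tendsto w v hwlim 0
  have hw1 := coord_tendsto w v hwlim 1
  have htw0 : Tendsto (fun k => p 0 + t k * w k 0) atTop (𝓝 (p 0)) := by
    simpa using tendsto_const_nhds.add (htlim.mul hw0)
  have htw1 : Tendsto (fun k => p 1 + t k * w k 1) atTop (𝓝 (p 1)) := by
    simpa using tendsto_const_nhds.add (htlim.mul hw1)
  rcases hp0 with hpa | ⟨hp00, hp10, hp1b⟩
  · -- p 0 = a
    have E2 : ∀ᶠ k in atTop, p 0 + t k * w k 0 ≠ 0 :=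
      htw0.eventually_ne (by rw [hpa]; exact ne_of_gt ha)
    have key : ∀ᶠ k in atTop, w k 0 ≤ 0 := by
      filter_upwards [E2] with k h2
      have hm := hmem k
      simp only [baseCell, Set.mem_setOf_eq, coord_add_smul] at hm
      rw [hpa] at hm h2
      rcases hm with ⟨_, hA⟩ | ⟨_, hA⟩ | ⟨hA, _⟩ | ⟨hA, _⟩
      · nlinarith [ht k]
      · nlinarith [ht k]
      · exact absurd hA h2
      · nlinarith [ht k]
    exact le_of_tendsto hw0 key
  · -- p 0 = 0, p 1 ≠ 0, p 1 ≠ b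
    have E1 : ∀ᶠ k in atTop, p 1 + t k * w k 1 ≠ 0 := htw1.eventually_ne hp10
    have E2 : ∀ᶠ k in atTop, p 1 + t k * w k 1 ≠ b := htw1.eventually_ne hp1b
    have E3 : ∀ᶠ k in atTop, p 0 + t k * w k 0 ≠ a :=
      htw0.eventually_ne (by rw [hp00]; exact ne_of_lt ha)
    have key : ∀ᶠ k in atTop, w k 0 ≤ 0 := by
      filter_upwards [E1, E2, E3] with k h1 h2 h3
      have hm := hmem k
      simp only [baseCell, Set.mem_setOf_eq, coord_add_smul] at hm
      rcases hm with ⟨hA, _⟩ | ⟨hA, _⟩ | ⟨hA, _⟩ | ⟨hA, _⟩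
      · exact absurd hA h1
      · exact absurd hA h2
      · rw [hp00] at hA; nlinarith [ht k]
      · exact absurd hA h3
    exact le_of_tendsto hw0 key

lemma d2_0 : d2 0 = 1 := rfl
lemma d2_1 : d2 1 = 1 := rfl
lemma e0_0 : e0 0 = 1 := rfl
lemma e0_1 : e0 1 = 0 := rfl
lemma e1_0 : e1 0 = 0 := rfl
lemma e1_1 : e1 1 = 1 := rfl

lemma hnormsub (v : EuclideanSpace ℝ (Fin 2)) :
    ‖d2 - v‖^2 = (1 - v 0)^2 + (1 - v 1)^2 := by
  rw [norm_sq]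
  have h0 : (d2 - v) 0 = 1 - v 0 := by rw [PiLp.sub_apply, d2_0]
  have h1 : (d2 - v) 1 = 1 - v 1 := by rw [PiLp.sub_apply, d2_1]
  rw [h0, h1]

lemma proj0 (C : Set (EuclideanSpace ℝ (Fin 2)))
    (hc : e0 ∈ C) (hle : ∀ v ∈ C, v 1 ≤ 0) :
    (metricProj C d2).Nonempty ∧ metricProj C d2 ⊆ {e0, e1} := by
  have hb : ∀ v ∈ C, (1:ℝ) ≤ dist d2 v := by
    intro v hvC
    have h1 := hle v hvC
    rw [dist_eq_norm]
    nlinarith [hnormsub v, norm_nonneg (d2 - v)]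
  have hd : ‖d2 - e0‖ = 1 := by
    have h := hnormsub e0
    rw [e0_0, e0_1] at h
    nlinarith [norm_nonneg (d2 - e0)]
  have hinf : infDist d2 C = 1 := by
    apply le_antisymm
    · calc infDist d2 C ≤ dist d2 e0 := infDist_le_dist_of_mem hc
        _ = 1 := by rw [dist_eq_norm]; exact hd
    · by_contra hlt
      push_neg at hlt
      obtain ⟨y, hy, hdy⟩ := (infDist_lt_iff ⟨_, hc⟩).1 hlt
      exact absurd hdy (not_lt.2 (hb y hy))
  constructor
  · exact ⟨e0, hc, by rw [hinf]; exact hd⟩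
  · rintro q ⟨hqC, hq⟩
    rw [hinf] at hq
    have h1 := hle q hqC
    have hsq : (1 - q 0)^2 + (1 - q 1)^2 = 1 := by
      rw [← hnormsub q, hq]; norm_num
    have hq0 : q 0 = 1 := by nlinarith
    have hq1 : q 1 = 0 := by nlinarith
    left
    ext i; fin_cases i <;> simp [e0, hq0, hq1]

lemma proj1 (C : Set (EuclideanSpace ℝ (Fin 2)))
    (hc : e1 ∈ C) (hle : ∀ v ∈ C, v 0 ≤ 0) :
    (metricProj C d2).Nonempty ∧ metricProj C d2 ⊆ {e0, e1} := by
  have hb : ∀ v ∈ C, (1:ℝ) ≤ dist d2 v := by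
    intro v hvC
    have h1 := hle v hvC
    rw [dist_eq_norm]
    nlinarith [hnormsub v, norm_nonneg (d2 - v)]
  have hd : ‖d2 - e1‖ = 1 := by
    have h := hnormsub e1
    rw [e1_0, e1_1] at h
    nlinarith [norm_nonneg (d2 - e1)]
  have hinf : infDist d2 C = 1 := by
    apply le_antisymm
    · calc infDist d2 C ≤ dist d2 e1 := infDist_le_dist_of_mem hc
        _ = 1 := by rw [dist_eq_norm]; exact hd
    · by_contra hlt
      push_neg at hlt
      obtain ⟨y, hy, hdy⟩ := (infDist_lt_iff ⟨_, hc⟩).1 hlt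
      exact absurd hdy (not_lt.2 (hb y hy))
  constructor
  · exact ⟨e1, hc, by rw [hinf]; exact hd⟩
  · rintro q ⟨hqC, hq⟩
    rw [hinf] at hq
    have h1 := hle q hqC
    have hsq : (1 - q 0)^2 + (1 - q 1)^2 = 1 := by
      rw [← hnormsub q, hq]; norm_num
    have hq1 : q 1 = 1 := by nlinarith
    have hq0 : q 0 = 0 := by nlinarith
    right
    show q = e1; ext i; fin_cases i <;> simp [e1, hq0, hq1]

end S14


/-- At every point of the base cell other than the vertex `(a,b)`, the
metric projection of `(1,1)` on the Bouligand tangent cone is nonempty and contained in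
`{(1,0), (0,1)}`. -/
theorem statement14 (a b : ℝ) (ha : 0 < a) (hb : 0 < b)
    (p : EuclideanSpace ℝ (Fin 2)) (hp : p ∈ baseCell a b)
    (hpv : p ≠ !₂[a, b]) :
    (metricProj (bouligandTangentCone (baseCell a b) p) !₂[1, 1]).Nonempty ∧
      metricProj (bouligandTangentCone (baseCell a b) p) !₂[1, 1] ⊆
        {!₂[1, 0], !₂[0, 1]} := by
  have hvtx : ¬ (p 0 = a ∧ p 1 = b) := by
    rintro ⟨h0, h1⟩
    exact hpv (by ext i; fin_cases i <;> simp [h0, h1])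
  rcases hp with ⟨h1, h0⟩ | ⟨h1, h0⟩ | ⟨h0, h1⟩ | ⟨h0, h1⟩
  · -- bottom line: p 1 = 0, p 0 ≤ a
    by_cases hpa : p 0 = a
    · -- corner (a, 0): projection is (0,1)
      apply S14.proj1
      · apply S14.mem_cone _ _ _ b hb
        intro t ht htb
        right; right; right
        constructor
        · rw [S14.coord_add_smul, hpa]; norm_num [S14.e0, S14.e1, Matrix.cons_val_zero, Matrix.cons_val_one, Matrix.head_cons]
        · rw [S14.coord_add_smul, h1]; norm_num [S14.e0, S14.e1, Matrix.cons_val_zero, Matrix.cons_val_one, Matrix.head_cons]; linarith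
      · exact S14.coneB a b ha p (Or.inl hpa)
    · -- p 0 < a: projection is (1,0)
      have hlt : p 0 < a := lt_of_le_of_ne h0 hpa
      apply S14.proj0
      · apply S14.mem_cone _ _ _ (a - p 0) (by linarith)
        intro t ht htb
        left
        constructor
        · rw [S14.coord_add_smul, h1]; norm_num [S14.e0, S14.e1, Matrix.cons_val_zero, Matrix.cons_val_one, Matrix.head_cons]
        · rw [S14.coord_add_smul]; norm_num [S14.e0, S14.e1, Matrix.cons_val_zero, Matrix.cons_val_one, Matrix.head_cons]; linarith
      · exact S14.coneA a b hb p (Or.inl h1) hpa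
  · -- top line: p 1 = b, p 0 ≤ a
    have hpa : p 0 ≠ a := fun h => hvtx ⟨h, h1⟩
    have hlt : p 0 < a := lt_of_le_of_ne h0 hpa
    apply S14.proj0
    · apply S14.mem_cone _ _ _ (a - p 0) (by linarith)
      intro t ht htb
      right; left
      constructor
      · rw [S14.coord_add_smul, h1]; norm_num [S14.e0, S14.e1, Matrix.cons_val_zero, Matrix.cons_val_one, Matrix.head_cons]
      · rw [S14.coord_add_smul]; norm_num [S14.e0, S14.e1, Matrix.cons_val_zero, Matrix.cons_val_one, Matrix.head_cons]; linarith
    · exact S14.coneA a b hb p (Or.inr h1) hpa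
  · -- left ray: p 0 = 0, p 1 ≤ 0
    by_cases hp1 : p 1 = 0
    · -- origin: projection is (1,0)
      apply S14.proj0
      · apply S14.mem_cone _ _ _ a ha
        intro t ht htb
        left
        constructor
        · rw [S14.coord_add_smul, hp1]; norm_num [S14.e0, S14.e1, Matrix.cons_val_zero, Matrix.cons_val_one, Matrix.head_cons]
        · rw [S14.coord_add_smul, h0]; norm_num [S14.e0, S14.e1, Matrix.cons_val_zero, Matrix.cons_val_one, Matrix.head_cons]; linarith
      · exact S14.coneA a b hb p (Or.inl hp1) (by rw [h0]; exact ne_of_lt ha)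
    · -- p 1 < 0: projection is (0,1)
      have hlt : p 1 < 0 := lt_of_le_of_ne h1 hp1
      apply S14.proj1
      · apply S14.mem_cone _ _ _ (-(p 1)) (by linarith)
        intro t ht htb
        right; right; left
        constructor
        · rw [S14.coord_add_smul, h0]; norm_num [S14.e0, S14.e1, Matrix.cons_val_zero, Matrix.cons_val_one, Matrix.head_cons]
        · rw [S14.coord_add_smul]; norm_num [S14.e0, S14.e1, Matrix.cons_val_zero, Matrix.cons_val_one, Matrix.head_cons]; linarith
      · exact S14.coneB a b ha p (Or.inr ⟨h0, hp1, by linarith⟩)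
  · -- right ray: p 0 = a, p 1 ≤ b
    have hp1 : p 1 ≠ b := fun h => hvtx ⟨h0, h⟩
    have hlt : p 1 < b := lt_of_le_of_ne h1 hp1
    apply S14.proj1
    · apply S14.mem_cone _ _ _ (b - p 1) (by linarith)
      intro t ht htb
      right; right; right
      constructor
      · rw [S14.coord_add_smul, h0]; norm_num [S14.e0, S14.e1, Matrix.cons_val_zero, Matrix.cons_val_one, Matrix.head_cons]
      · rw [S14.coord_add_smul]; norm_num [S14.e0, S14.e1, Matrix.cons_val_zero, Matrix.cons_val_one, Matrix.head_cons]; linarith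
    · exact S14.coneB a b ha p (Or.inl h0)
end
end
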